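/- arXiv:1405.3324 — 3 statements merged into one kernel-verified Lean document; each statement's English description precedes it below -/
import Mathlib

section
/- Let F be an algebraically closed field of characteristic 2, let n ≥ 6 be even, let V be an irreducible F S_n-module satisfying d_3(V) > d_1(V), and let X be a subgroup of S_n. Let N := Ker η_{3,1} ⊆ M_3. Suppose that for every nonzero F S_n-module quotient J of N one has J^X ≠ 0, and that additionally dim_F J^X ≥ 2 whenever J^{S_n} ≠ 0. Then the restriction of V to X is a reducible F X-module. -/
open scoped Pointwise

/-- The set of `r`-element subsets of `{1, ..., n}`. -/
abbrev NSub (n r : ℕ) := {s : Finset (Fin n) // s.card = r}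

/-- The symmetric group `Sₙ` acts on `r`-element subsets of `{1, ..., n}`. -/
instance NSub.instMulAction (n r : ℕ) : MulAction (Equiv.Perm (Fin n)) (NSub n r) where
  smul g s := ⟨g • s.1, by rw [Finset.card_smul_finset]; exact s.2⟩
  one_smul s := Subtype.ext (one_smul _ s.1)
  mul_smul g h s := Subtype.ext (mul_smul g h s.1)

/-- The permutation module `M_r` of `Sₙ` on `r`-element subsets of `{1, ..., n}`. -/
abbrev MM (F : Type*) [Field F] (n r : ℕ) : Type _ := NSub n r →₀ F

/-- The representation of `Sₙ` on the permutation module `M_r`. -/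
noncomputable abbrev Mrep (F : Type*) [Field F] (n r : ℕ) :
    Representation F (Equiv.Perm (Fin n)) (MM F n r) where
  toFun g := Finsupp.lmapDomain F F (g • ·)
  map_one' := by ext x y; simp
  map_mul' x y := by ext z w; simp [mul_smul]

/-- The incidence map `η_{r,s} : M_r → M_s`, sending an `r`-subset to the sum of all
`s`-subsets incident with it (i.e. containing it or contained in it). -/
noncomputable def eta (F : Type*) [Field F] (n r s : ℕ) : MM F n r →ₗ[F] MM F n s :=
  Finsupp.lift (MM F n s) F (NSub n r) fun A =>
    ∑ B : NSub n s, if A.1 ⊆ B.1 ∨ B.1 ⊆ A.1 then Finsupp.single B (1 : F) else 0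

/-- A submodule is invariant under a representation. -/
def RepInvariant {F G V : Type*} [Field F] [Monoid G] [AddCommGroup V] [Module F V]
    (ρ : Representation F G V) (p : Submodule F V) : Prop :=
  ∀ g : G, ∀ v ∈ p, ρ g v ∈ p

/-- A representation is irreducible if the space is nonzero and the only invariant
submodules are `⊥` and `⊤`. -/
def RepIrreducible {F G V : Type*} [Field F] [Monoid G] [AddCommGroup V] [Module F V]
    (ρ : Representation F G V) : Prop :=
  Nontrivial V ∧ ∀ p : Submodule F V, RepInvariant ρ p → p = ⊥ ∨ p = ⊤

/-- The space of `G`-equivariant linear maps between two representations. -/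
def EquivariantHom {F G V W : Type*} [Field F] [Monoid G] [AddCommGroup V] [Module F V]
    [AddCommGroup W] [Module F W]
    (ρ₁ : Representation F G V) (ρ₂ : Representation F G W) : Submodule F (V →ₗ[F] W) where
  carrier := {f | ∀ g v, f (ρ₁ g v) = ρ₂ g (f v)}
  add_mem' := by
    intro f h hf hh g v
    simp [hf g v, hh g v]
  zero_mem' := by
    intro g v
    simp
  smul_mem' := by
    intro c f hf g v
    simp [hf g v]

/-- `d_r(V) = dim Hom_{F Sₙ}(M_r, End_F(V))`. -/
noncomputable def dr (F : Type*) [Field F] (n r : ℕ) {V : Type*} [AddCommGroup V] [Module F V]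
    (ρ : Representation F (Equiv.Perm (Fin n)) V) : ℕ :=
  Module.finrank F (EquivariantHom (Mrep F n r) (ρ.linHom ρ))

/-- The quotient representation on `V ⧸ p`, for `p` an invariant submodule. -/
noncomputable def quotRep {F G V : Type*} [Field F] [Group G] [AddCommGroup V] [Module F V]
    (ρ : Representation F G V) (p : Submodule F V) (hp : RepInvariant ρ p) :
    Representation F G (V ⧸ p) where
  toFun g := Submodule.mapQ p p (ρ g) (fun v hv => hp g v hv)
  map_one' := by
    apply Submodule.linearMap_qext
    ext v
    simp [Submodule.mapQ_apply]
  map_mul' g h := by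
    apply Submodule.linearMap_qext
    ext v
    simp [Submodule.mapQ_apply]

/-- The subspace of `X`-fixed points of a representation, for `X` a subgroup. -/
noncomputable def fixedBy {F G V : Type*} [Field F] [Group G] [AddCommGroup V] [Module F V]
    (ρ : Representation F G V) (X : Subgroup G) : Submodule F V :=
  Representation.invariants (MonoidHom.comp ρ X.subtype)

/-- `T_1 ∈ M_1`, the sum of all `1`-element subsets. -/
noncomputable def T1 (F : Type*) [Field F] (n : ℕ) : MM F n 1 :=
  ∑ A : NSub n 1, Finsupp.single A 1

lemma Mrep_T1 (F : Type*) [Field F] (n : ℕ) (g : Equiv.Perm (Fin n)) :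
    Mrep F n 1 g (T1 F n) = T1 F n := by
  unfold T1
  rw [map_sum]
  simp only [MonoidHom.coe_mk, OneHom.coe_mk, Finsupp.lmapDomain_apply, Finsupp.mapDomain_single]
  exact Fintype.sum_equiv (MulAction.toPerm g) _ _ fun A => rfl

lemma spanT1_invariant (F : Type*) [Field F] (n : ℕ) :
    RepInvariant (Mrep F n 1) (Submodule.span F {T1 F n}) := by
  intro g v hv
  rw [Submodule.mem_span_singleton] at hv ⊢
  obtain ⟨c, rfl⟩ := hv
  refine ⟨c, ?_⟩
  rw [map_smul, Mrep_T1]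

/-- The `F Sₙ`-module `Q = M_1 / (F·T_1)`. -/
noncomputable def Qrep (F : Type*) [Field F] (n : ℕ) :
    Representation F (Equiv.Perm (Fin n)) (MM F n 1 ⧸ Submodule.span F {T1 F n}) :=
  quotRep (Mrep F n 1) (Submodule.span F {T1 F n}) (spanT1_invariant F n)

/-- `f_r(X) = dim (M_r)^X`, the number of `X`-orbits on `r`-subsets. -/
noncomputable def fr (F : Type*) [Field F] (n r : ℕ) (X : Subgroup (Equiv.Perm (Fin n))) : ℕ :=
  Module.finrank F (fixedBy (Mrep F n r) X)

/-- The `1`-cocycles of a representation: functions `f : G → V` with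
`f (g h) = f g + g • f h`. -/
noncomputable def oneCocycles' {F G V : Type*} [Field F] [Group G] [AddCommGroup V]
    [Module F V] (ρ : Representation F G V) : Submodule F (G → V) where
  carrier := {f | ∀ g h : G, f (g * h) = f g + ρ g (f h)}
  zero_mem' := by intro g h; simp
  add_mem' := by
    intro f₁ f₂ h₁ h₂ g h
    simp only [Pi.add_apply, map_add, h₁ g h, h₂ g h]
    abel
  smul_mem' := by
    intro c f hf g h
    simp [hf g h, smul_add]

/-- The coboundary map `V → (G → V)`, `v ↦ (g ↦ g • v - v)`. -/
noncomputable def d01 {F G V : Type*} [Field F] [Group G] [AddCommGroup V]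
    [Module F V] (ρ : Representation F G V) : V →ₗ[F] (G → V) where
  toFun v := fun g => ρ g v - v
  map_add' := by
    intro u v
    funext g
    simp only [map_add, Pi.add_apply]
    abel
  map_smul' := by
    intro c v
    funext g
    simp [map_smul, smul_sub]

/-- The dimension of the first group cohomology `H¹(G, V)` of a representation, defined
as `1`-cocycles modulo `1`-coboundaries. -/
noncomputable def H1dim {F G V : Type*} [Field F] [Group G] [AddCommGroup V]
    [Module F V] (ρ : Representation F G V) : ℕ :=
  Module.finrank F
    (↥(oneCocycles' ρ) ⧸ Submodule.comap (oneCocycles' ρ).subtype (LinearMap.range (d01 ρ)))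

/-- `h(X) = dim H¹(X, Q)`. -/
noncomputable def hX (F : Type*) [Field F] (n : ℕ) (X : Subgroup (Equiv.Perm (Fin n))) : ℕ :=
  H1dim ((Qrep F n).comp X.subtype)

/-- The Specht module `S^{(n-2,2)} = Ker η_{2,0} ∩ Ker η_{2,1} ⊆ M_2`. -/
noncomputable def Specht2 (F : Type*) [Field F] (n : ℕ) : Submodule F (MM F n 2) :=
  LinearMap.ker (eta F n 2 0) ⊓ LinearMap.ker (eta F n 2 1)


/-! ### Auxiliary lemmas for the proof of `stmt7` -/

lemma Mrep_single (F : Type*) [Field F] (n r : ℕ) (g : Equiv.Perm (Fin n)) (A : NSub n r)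
    (b : F) : Mrep F n r g (Finsupp.single A b) = Finsupp.single (g • A) b := by
  simp only [MonoidHom.coe_mk, OneHom.coe_mk, Finsupp.lmapDomain_apply, Finsupp.mapDomain_single]

noncomputable def NSub.sing {n : ℕ} (x : Fin n) : NSub n 1 := ⟨{x}, Finset.card_singleton x⟩

lemma NSub.exists_sing {n : ℕ} (B : NSub n 1) : ∃ x, B = NSub.sing x := by
  obtain ⟨x, hx⟩ := Finset.card_eq_one.mp B.2
  exact ⟨x, Subtype.ext hx⟩

lemma NSub.smul_coe {n r : ℕ} (g : Equiv.Perm (Fin n)) (A : NSub n r) :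
    (g • A).1 = g • A.1 := rfl

lemma NSub.smul_subset_iff {n r s : ℕ} (g : Equiv.Perm (Fin n)) (A : NSub n r) (B : NSub n s) :
    (g • A).1 ⊆ (g • B).1 ↔ A.1 ⊆ B.1 := by
  rw [NSub.smul_coe, NSub.smul_coe]
  exact Finset.smul_finset_subset_smul_finset_iff

lemma eta_single (F : Type*) [Field F] (n r s : ℕ) (A : NSub n r) :
    eta F n r s (Finsupp.single A 1) =
      ∑ B : NSub n s, if A.1 ⊆ B.1 ∨ B.1 ⊆ A.1 then Finsupp.single B (1 : F) else 0 := by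
  unfold eta
  simp [Finsupp.lift_apply, Finsupp.sum_single_index]

lemma eta_equivariant (F : Type*) [Field F] (n r s : ℕ) (g : Equiv.Perm (Fin n))
    (x : MM F n r) : eta F n r s (Mrep F n r g x) = Mrep F n s g (eta F n r s x) := by
  have key : (eta F n r s).comp ((Mrep F n r) g) = ((Mrep F n s) g).comp (eta F n r s) := by
    apply Finsupp.lhom_ext
    intro A b
    have h1 : (Mrep F n r) g (Finsupp.single A b) = Finsupp.single (g • A) b :=
      Mrep_single ..
    simp only [LinearMap.comp_apply, h1]
    have e2 : ∀ (t : ℕ) (A : NSub n t) (b : F), Finsupp.single A b = b • Finsupp.single A 1 := by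
      intro t A b; rw [Finsupp.smul_single, smul_eq_mul, mul_one]
    rw [e2 _ (g • A) b, e2 _ A b, map_smul, map_smul, map_smul]
    congr 1
    rw [eta_single, eta_single, map_sum]
    have step : ∀ B : NSub n s,
        (Mrep F n s) g (if A.1 ⊆ B.1 ∨ B.1 ⊆ A.1 then Finsupp.single B (1:F) else 0) =
        (if (g • A).1 ⊆ (g • B).1 ∨ (g • B).1 ⊆ (g • A).1
          then Finsupp.single (g • B) (1:F) else 0) := by
      intro B
      by_cases h : A.1 ⊆ B.1 ∨ B.1 ⊆ A.1
      · rw [if_pos h, if_pos, Mrep_single]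
        rcases h with h | h
        · exact Or.inl ((NSub.smul_subset_iff g A B).2 h)
        · exact Or.inr ((NSub.smul_subset_iff g B A).2 h)
      · rw [if_neg h, if_neg, map_zero]
        rw [NSub.smul_subset_iff, NSub.smul_subset_iff]
        exact h
    simp only [step]
    exact (Equiv.sum_comp (MulAction.toPerm g) (fun B : NSub n s =>
      if (g • A).1 ⊆ B.1 ∨ B.1 ⊆ (g • A).1 then Finsupp.single B (1:F) else 0)).symm
  exact LinearMap.congr_fun key x

lemma eta31_single (F : Type*) [Field F] (n : ℕ) (A : NSub n 3) :
    eta F n 3 1 (Finsupp.single A 1) = ∑ x ∈ A.1, Finsupp.single (NSub.sing x) (1 : F) := by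
  rw [eta_single]
  have hc : ∀ B : NSub n 1, (A.1 ⊆ B.1 ∨ B.1 ⊆ A.1) ↔ B.1 ⊆ A.1 := by
    intro B
    constructor
    · rintro (h | h)
      · have := Finset.card_le_card h
        rw [A.2, B.2] at this; omega
      · exact h
    · exact Or.inr
  simp only [hc]
  rw [← Finset.sum_filter]
  refine Finset.sum_nbij' (fun B => Finset.min' B.1
      (Finset.card_pos.mp (by rw [B.2]; norm_num)))
    (fun x => NSub.sing x) ?_ ?_ ?_ ?_ ?_
  · intro B hB
    simp only [Finset.mem_filter, Finset.mem_univ, true_and] at hB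
    exact hB (Finset.min'_mem _ _)
  · intro x hx
    simp only [Finset.mem_filter, Finset.mem_univ, true_and, NSub.sing]
    simpa using hx
  · intro B hB
    obtain ⟨x, rfl⟩ := NSub.exists_sing B
    simp [NSub.sing]
  · intro x hx
    simp [NSub.sing]
  · intro B hB
    obtain ⟨x, rfl⟩ := NSub.exists_sing B
    simp [NSub.sing]

noncomputable def mk3 {n : ℕ} (a b c : Fin n) (hab : a ≠ b) (hac : a ≠ c) (hbc : b ≠ c) :
    NSub n 3 := ⟨{a, b, c}, by
      rw [Finset.card_insert_of_notMem (by simp [hab, hac]),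
        Finset.card_insert_of_notMem (by simp [hbc]), Finset.card_singleton]⟩

lemma sum_mk3 {n : ℕ} {M : Type*} [AddCommMonoid M] (a b c : Fin n)
    (hab : a ≠ b) (hac : a ≠ c) (hbc : b ≠ c) (f : Fin n → M) :
    ∑ x ∈ (mk3 a b c hab hac hbc).1, f x = f a + f b + f c := by
  show ∑ x ∈ ({a, b, c} : Finset (Fin n)), f x = f a + f b + f c
  rw [Finset.sum_insert (by simp [hab, hac]), Finset.sum_insert (by simp [hbc]),
    Finset.sum_singleton, add_assoc]

lemma eta31_surjective (F : Type*) [Field F] [CharP F 2] {n : ℕ} (hn : 6 ≤ n) :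
    LinearMap.range (eta F n 3 1) = ⊤ := by
  rw [eq_top_iff]
  -- first, hit the basis vectors
  have hsing : ∀ B : NSub n 1, Finsupp.single B (1 : F) ∈ LinearMap.range (eta F n 3 1) := by
    intro B
    -- distinct points q 0, ..., q 5
    set q : Fin 6 → Fin n := fun i => Fin.castLE hn i with hqdef
    have hq : ∀ i j : Fin 6, i ≠ j → q i ≠ q j := by
      intro i j hij h
      apply hij
      have : (q i).val = (q j).val := congrArg Fin.val h
      simpa [hqdef, Fin.coe_castLE] using Fin.ext this
    -- the element z₀ with η₃₁ z₀ = single (sing (q 0)) 1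
    have hbase : Finsupp.single (NSub.sing (q 0)) (1 : F) ∈ LinearMap.range (eta F n 3 1) := by
      set T1 := mk3 (q 1) (q 2) (q 3) (hq _ _ (by decide)) (hq _ _ (by decide))
        (hq _ _ (by decide))
      set T2 := mk3 (q 1) (q 4) (q 5) (hq _ _ (by decide)) (hq _ _ (by decide))
        (hq _ _ (by decide))
      set T3 := mk3 (q 2) (q 4) (q 5) (hq _ _ (by decide)) (hq _ _ (by decide))
        (hq _ _ (by decide))
      set T4 := mk3 (q 3) (q 4) (q 5) (hq _ _ (by decide)) (hq _ _ (by decide))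
        (hq _ _ (by decide))
      set T5 := mk3 (q 0) (q 4) (q 5) (hq _ _ (by decide)) (hq _ _ (by decide))
        (hq _ _ (by decide))
      refine ⟨Finsupp.single T1 1 + Finsupp.single T2 1 + Finsupp.single T3 1 +
        Finsupp.single T4 1 + Finsupp.single T5 1, ?_⟩
      rw [map_add, map_add, map_add, map_add,
        eta31_single, eta31_single, eta31_single, eta31_single, eta31_single]
      rw [sum_mk3, sum_mk3, sum_mk3, sum_mk3, sum_mk3]
      set s : Fin 6 → MM F n 1 := fun i => Finsupp.single (NSub.sing (q i)) (1 : F) with hs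
      show (s 1 + s 2 + s 3) + (s 1 + s 4 + s 5) + (s 2 + s 4 + s 5) + (s 3 + s 4 + s 5)
        + (s 0 + s 4 + s 5) = s 0
      have h2 : ∀ v : MM F n 1, v + v = 0 := by
        intro v
        have h20 : (2 : F) = 0 := by exact_mod_cast CharP.cast_eq_zero F 2
        rw [← two_smul F v, h20, zero_smul]
      have h2' : ∀ v : MM F n 1, (2:ℤ) • v = 0 := fun v => by rw [two_zsmul, h2]
      have h4 : ∀ v : MM F n 1, (4:ℤ) • v = 0 := by
        intro v
        have h : (4:ℤ) • v = (2:ℤ) • v + (2:ℤ) • v := by rw [← add_zsmul]; norm_num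
        simp [h, h2']
      abel_nf
      rw [h2' (s 1), h2' (s 2), h2' (s 3), h4 (s 4), h4 (s 5)]
      abel
    -- transport by transitivity
    obtain ⟨p, rfl⟩ := NSub.exists_sing B
    obtain ⟨z, hz⟩ := hbase
    set g := Equiv.swap (q 0) p
    refine ⟨Mrep F n 3 g z, ?_⟩
    rw [eta_equivariant, hz]
    have : g • NSub.sing (q 0) = NSub.sing p := by
      apply Subtype.ext
      rw [NSub.smul_coe]
      show g • ({q 0} : Finset (Fin n)) = {p}
      have hgp : g • q 0 = p := Equiv.swap_apply_left (q 0) p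
      rw [Finset.smul_finset_singleton, hgp]
    rw [Mrep_single, this]
  -- now conclude for all elements
  intro v hv
  clear hv
  induction v using Finsupp.induction with
  | zero => exact Submodule.zero_mem _
  | single_add B b f _ _ ih =>
    refine Submodule.add_mem _ ?_ ih
    have : Finsupp.single B b = b • Finsupp.single B (1:F) := by
      rw [Finsupp.smul_single, smul_eq_mul, mul_one]
    rw [this]
    exact Submodule.smul_mem _ b (hsing B)

lemma mem_equivariantHom {F G V W : Type*} [Field F] [Monoid G] [AddCommGroup V] [Module F V]
    [AddCommGroup W] [Module F W]
    (ρ₁ : Representation F G V) (ρ₂ : Representation F G W) (f : V →ₗ[F] W) :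
    f ∈ EquivariantHom ρ₁ ρ₂ ↔ ∀ g v, f (ρ₁ g v) = ρ₂ g (f v) := Iff.rfl

/-- Schur's lemma over an algebraically closed field. -/
lemma schur_scalar {F G V : Type*} [Field F] [IsAlgClosed F] [Group G] [AddCommGroup V]
    [Module F V] [FiniteDimensional F V] (ρ : Representation F G V)
    (hirr : RepIrreducible ρ) (f : V →ₗ[F] V)
    (hf : ∀ g : G, (ρ g) ∘ₗ f = f ∘ₗ (ρ g)) : ∃ c : F, f = c • LinearMap.id := by
  haveI : Nontrivial V := hirr.1
  have idV : (LinearMap.id : V →ₗ[F] V) = LinearMap.id := rfl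
  obtain ⟨c, hc⟩ := Module.End.exists_eigenvalue f
  refine ⟨c, ?_⟩
  obtain ⟨v, hv⟩ := hc.exists_hasEigenvector
  have hv0 : v ≠ 0 := hv.right
  have hveq : f v = c • v := hv.apply_eq_smul
  set p := LinearMap.ker (f - c • (LinearMap.id : V →ₗ[F] V)) with hp
  have hinv : RepInvariant ρ p := by
    intro g w hw
    rw [LinearMap.mem_ker] at hw ⊢
    have : (f - c • (LinearMap.id : V →ₗ[F] V)) ((ρ g) w) = (ρ g) ((f - c • (LinearMap.id : V →ₗ[F] V)) w) := by
      simp only [LinearMap.sub_apply, LinearMap.smul_apply, LinearMap.id_apply, map_sub,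
        map_smul]
      rw [← LinearMap.comp_apply, ← hf g, LinearMap.comp_apply]
    rw [this, hw, map_zero]
  rcases hirr.2 p hinv with h | h
  · exfalso
    have hvp : v ∈ p := by
      rw [hp, LinearMap.mem_ker, LinearMap.sub_apply, LinearMap.smul_apply, LinearMap.id_apply,
        hveq, sub_self]
    rw [h] at hvp
    exact hv0 (Submodule.mem_bot F |>.mp hvp)
  · have : f - c • (LinearMap.id : V →ₗ[F] V) = 0 := LinearMap.ker_eq_top.mp h
    rw [← sub_eq_zero]
    exact this


lemma quotRep_mkQ {F G V : Type*} [Field F] [Group G] [AddCommGroup V] [Module F V]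
    (ρ : Representation F G V) (p : Submodule F V) (hp : RepInvariant ρ p) (g : G) (x : V) :
    quotRep ρ p hp g (p.mkQ x) = p.mkQ (ρ g x) := by
  have h : (quotRep ρ p hp) g = Submodule.mapQ p p (ρ g) (fun v hv => hp g v hv) := rfl
  rw [h, Submodule.mkQ_apply, Submodule.mapQ_apply, Submodule.mkQ_apply]

set_option maxHeartbeats 1000000 in
/-- main reduction pre-theorem: let `F` be algebraically closed of
characteristic 2, `n ≥ 6` even, `V` an irreducible `F Sₙ`-module with `d_3(V) > d_1(V)`,
and `X ≤ Sₙ`. Let `N = Ker η_{3,1} ⊆ M_3`. If every nonzero `F Sₙ`-quotient `J` of `N`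
satisfies `J^X ≠ 0`, and moreover `dim J^X ≥ 2` whenever `J^{Sₙ} ≠ 0`, then the
restriction of `V` to `X` is reducible. (A quotient of `N` by an `F Sₙ`-submodule
`K ≤ N` is realized as the image of `N` in `M_3 ⧸ K`.) -/
theorem stmt7 {F : Type*} [Field F] [IsAlgClosed F] [CharP F 2]
    {n : ℕ} (hn : 6 ≤ n) (hneven : Even n)
    (V : Type*) [AddCommGroup V] [Module F V] [FiniteDimensional F V]
    (ρ : Representation F (Equiv.Perm (Fin n)) V)
    (hirr : RepIrreducible ρ)
    (hd : dr F n 1 ρ < dr F n 3 ρ)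
    (X : Subgroup (Equiv.Perm (Fin n)))
    (hJ : ∀ (K : Submodule F (MM F n 3)) (hK : RepInvariant (Mrep F n 3) K),
      K ≤ LinearMap.ker (eta F n 3 1) →
      (LinearMap.ker (eta F n 3 1)).map K.mkQ ≠ ⊥ →
      ((LinearMap.ker (eta F n 3 1)).map K.mkQ ⊓ fixedBy (quotRep (Mrep F n 3) K hK) X ≠ ⊥ ∧
        ((LinearMap.ker (eta F n 3 1)).map K.mkQ ⊓
            Representation.invariants (quotRep (Mrep F n 3) K hK) ≠ ⊥ →
          2 ≤ Module.finrank F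
            ↥((LinearMap.ker (eta F n 3 1)).map K.mkQ ⊓
              fixedBy (quotRep (Mrep F n 3) K hK) X)))) :
    ¬ RepIrreducible (ρ.comp X.subtype) := by
  intro hcontra
  haveI : Nontrivial V := hcontra.1
  set N := LinearMap.ker (eta F n 3 1) with hNdef
  have hNinv : ∀ (g : Equiv.Perm (Fin n)) x, x ∈ N → Mrep F n 3 g x ∈ N := by
    intro g x hx
    rw [hNdef, LinearMap.mem_ker] at hx ⊢
    rw [eta_equivariant, hx, map_zero]
  -- Step 1 : an equivariant map M₃ → End V not vanishing on N
  have hstep1 : ∃ φ : MM F n 3 →ₗ[F] (V →ₗ[F] V),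
      φ ∈ EquivariantHom (Mrep F n 3) (ρ.linHom ρ) ∧ ¬ N ≤ LinearMap.ker φ := by
    by_contra hall
    push_neg at hall
    obtain ⟨s, hs⟩ := (eta F n 3 1).exists_rightInverse_of_surjective (eta31_surjective F hn)
    have hsid : ∀ x, eta F n 3 1 (s x) = x := fun x => LinearMap.congr_fun hs x
    have hmem : ∀ (φ : ↥(EquivariantHom (Mrep F n 3) (ρ.linHom ρ))),
        (φ : MM F n 3 →ₗ[F] (V →ₗ[F] V)).comp s ∈ EquivariantHom (Mrep F n 1) (ρ.linHom ρ) := by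
      intro φ
      rw [mem_equivariantHom]
      intro g v
      have hker : s (Mrep F n 1 g v) - Mrep F n 3 g (s v) ∈ N := by
        rw [hNdef, LinearMap.mem_ker, map_sub, hsid, eta_equivariant, hsid, sub_self]
      have h0 : (φ : MM F n 3 →ₗ[F] (V →ₗ[F] V)) (s (Mrep F n 1 g v) - Mrep F n 3 g (s v)) = 0 :=
        hall (φ : MM F n 3 →ₗ[F] (V →ₗ[F] V)) φ.2 hker
      rw [map_sub, sub_eq_zero] at h0
      simp only [LinearMap.comp_apply]
      rw [h0]
      exact φ.2 g (s v)
    set Ψ : ↥(EquivariantHom (Mrep F n 3) (ρ.linHom ρ)) →ₗ[F]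
        ↥(EquivariantHom (Mrep F n 1) (ρ.linHom ρ)) :=
      { toFun := fun φ => ⟨(φ : MM F n 3 →ₗ[F] (V →ₗ[F] V)).comp s, hmem φ⟩
        map_add' := by intro φ ψ; apply Subtype.ext; simp [LinearMap.add_comp]
        map_smul' := by intro c φ; apply Subtype.ext; simp [LinearMap.smul_comp] } with hΨ
    have hinj : Function.Injective Ψ := by
      intro φ ψ hpq
      have hcoe : (φ : MM F n 3 →ₗ[F] (V →ₗ[F] V)).comp s
          = (ψ : MM F n 3 →ₗ[F] (V →ₗ[F] V)).comp s := congrArg Subtype.val hpq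
      apply Subtype.ext
      apply LinearMap.ext
      intro x
      have hx : x - s (eta F n 3 1 x) ∈ N := by
        rw [hNdef, LinearMap.mem_ker, map_sub, hsid, sub_self]
      have h1 : (φ : MM F n 3 →ₗ[F] (V →ₗ[F] V)) (x - s (eta F n 3 1 x)) = 0 :=
        hall (φ : MM F n 3 →ₗ[F] (V →ₗ[F] V)) φ.2 hx
      have h2 : (ψ : MM F n 3 →ₗ[F] (V →ₗ[F] V)) (x - s (eta F n 3 1 x)) = 0 :=
        hall (ψ : MM F n 3 →ₗ[F] (V →ₗ[F] V)) ψ.2 hx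
      rw [map_sub, sub_eq_zero] at h1 h2
      rw [h1, h2]
      exact LinearMap.congr_fun hcoe (eta F n 3 1 x)
    have hle := LinearMap.finrank_le_finrank_of_injective hinj
    unfold dr at hd
    omega
  obtain ⟨φ, hφmem, hφN⟩ := hstep1
  rw [mem_equivariantHom] at hφmem
  have hφequi : ∀ (g : Equiv.Perm (Fin n)) x,
      φ (Mrep F n 3 g x) = ρ g ∘ₗ (φ x) ∘ₗ ρ g⁻¹ := by
    intro g x
    rw [hφmem g x]
    simp [Representation.linHom]
  have hcompinv : ∀ g : Equiv.Perm (Fin n), (ρ g⁻¹) ∘ₗ (ρ g) = LinearMap.id := by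
    intro g
    rw [← Module.End.mul_eq_comp, ← map_mul, inv_mul_cancel, map_one]
    rfl
  set K : Submodule F (MM F n 3) := N ⊓ LinearMap.ker φ with hKdef
  have hKN : K ≤ N := inf_le_left
  have hKker : K ≤ LinearMap.ker φ := inf_le_right
  have hKinv : RepInvariant (Mrep F n 3) K := by
    intro g x hx
    rw [hKdef, Submodule.mem_inf] at hx ⊢
    refine ⟨hNinv g x hx.1, ?_⟩
    rw [LinearMap.mem_ker] at hx ⊢
    rw [hφmem g x, hx.2, map_zero]
  obtain ⟨x1, hx1N, hx1φ⟩ : ∃ x ∈ N, φ x ≠ 0 := by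
    by_contra h
    push_neg at h
    exact hφN (fun x hx => LinearMap.mem_ker.mpr (h x hx))
  have hJne : N.map K.mkQ ≠ ⊥ := by
    intro hbot
    have hm : K.mkQ x1 ∈ N.map K.mkQ := Submodule.mem_map_of_mem hx1N
    rw [hbot, Submodule.mem_bot] at hm
    rw [Submodule.mkQ_apply, Submodule.Quotient.mk_eq_zero] at hm
    exact hx1φ (LinearMap.mem_ker.mp (hKker hm))
  obtain ⟨h1, h2⟩ := hJ K hKinv hKN hJne
  -- the scalar lemma: any N-element whose class is X-fixed maps to a scalar under φ
  have hScal : ∀ x ∈ N, (K.mkQ x ∈ fixedBy (quotRep (Mrep F n 3) K hKinv) X) →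
      ∃ c : F, φ x = c • LinearMap.id := by
    intro x hx hfx
    apply schur_scalar (ρ.comp X.subtype) hcontra
    intro ξ
    have hfix : quotRep (Mrep F n 3) K hKinv (X.subtype ξ) (K.mkQ x) = K.mkQ x := hfx ξ
    have hmk : K.mkQ (Mrep F n 3 (ξ : Equiv.Perm (Fin n)) x) = K.mkQ x := by
      rw [← hfix, quotRep_mkQ]
      rfl
    rw [Submodule.mkQ_apply, Submodule.mkQ_apply, Submodule.Quotient.eq] at hmk
    have hφeq : φ (Mrep F n 3 (ξ : Equiv.Perm (Fin n)) x) = φ x := by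
      rw [← sub_eq_zero, ← map_sub]
      exact LinearMap.mem_ker.mp (hKker hmk)
    have heq : ρ (ξ : Equiv.Perm (Fin n)) ∘ₗ (φ x) ∘ₗ ρ (ξ : Equiv.Perm (Fin n))⁻¹ = φ x := by
      rw [← hφequi, hφeq]
    show ρ (ξ : Equiv.Perm (Fin n)) ∘ₗ (φ x) = (φ x) ∘ₗ ρ (ξ : Equiv.Perm (Fin n))
    conv_rhs => rw [← heq]
    rw [LinearMap.comp_assoc, LinearMap.comp_assoc, hcompinv, LinearMap.comp_id]
  -- get a nonzero X-fixed element of J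
  obtain ⟨w0, hw0mem, hw0ne⟩ := Submodule.exists_mem_ne_zero_of_ne_bot h1
  rw [Submodule.mem_inf] at hw0mem
  obtain ⟨x0, hx0N, hx0eq⟩ := Submodule.mem_map.mp hw0mem.1
  have hx0fix : K.mkQ x0 ∈ fixedBy (quotRep (Mrep F n 3) K hKinv) X := by
    rw [hx0eq]; exact hw0mem.2
  obtain ⟨c0, hc0⟩ := hScal x0 hx0N hx0fix
  have hc0ne : c0 ≠ 0 := by
    intro h0
    apply hw0ne
    rw [← hx0eq, Submodule.mkQ_apply, Submodule.Quotient.mk_eq_zero]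
    rw [hKdef, Submodule.mem_inf]
    exact ⟨hx0N, LinearMap.mem_ker.mpr (by rw [hc0, h0, zero_smul])⟩
  -- the class of x0 is in fact Sₙ-invariant
  have hinvne : N.map K.mkQ ⊓
      Representation.invariants (quotRep (Mrep F n 3) K hKinv) ≠ ⊥ := by
    intro hbot
    apply hw0ne
    rw [← Submodule.mem_bot (R := F), ← hbot, Submodule.mem_inf]
    refine ⟨hw0mem.1, ?_⟩
    rw [Representation.mem_invariants]
    intro g
    rw [← hx0eq]
    have hmk : quotRep (Mrep F n 3) K hKinv g (K.mkQ x0) = K.mkQ (Mrep F n 3 g x0) :=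
      quotRep_mkQ (Mrep F n 3) K hKinv g x0
    rw [hmk, Submodule.mkQ_apply, Submodule.mkQ_apply, Submodule.Quotient.eq]
    rw [hKdef, Submodule.mem_inf]
    refine ⟨sub_mem (hNinv g x0 hx0N) hx0N, ?_⟩
    rw [LinearMap.mem_ker, map_sub, hφequi, hc0, sub_eq_zero]
    rw [LinearMap.smul_comp, LinearMap.comp_smul, LinearMap.id_comp]
    rw [← Module.End.mul_eq_comp, ← map_mul, mul_inv_cancel, map_one]
    rfl
  have h2' := h2 hinvne
  -- but that X-fixed space is at most one-dimensional
  have hle : N.map K.mkQ ⊓ fixedBy (quotRep (Mrep F n 3) K hKinv) X ≤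
      Submodule.span F {w0} := by
    intro w hw
    rw [Submodule.mem_inf] at hw
    obtain ⟨x, hxN, hxeq⟩ := Submodule.mem_map.mp hw.1
    have hxfix : K.mkQ x ∈ fixedBy (quotRep (Mrep F n 3) K hKinv) X := by
      rw [hxeq]; exact hw.2
    obtain ⟨c, hc⟩ := hScal x hxN hxfix
    rw [Submodule.mem_span_singleton]
    refine ⟨c / c0, ?_⟩
    have hker : x - (c / c0) • x0 ∈ K := by
      rw [hKdef, Submodule.mem_inf]
      refine ⟨sub_mem hxN (Submodule.smul_mem _ _ hx0N), ?_⟩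
      rw [LinearMap.mem_ker, map_sub, map_smul, hc, hc0, smul_smul,
        div_mul_cancel₀ c hc0ne, sub_self]
    have hq : K.mkQ x = K.mkQ ((c / c0) • x0) := by
      rw [Submodule.mkQ_apply, Submodule.mkQ_apply, Submodule.Quotient.eq]
      exact hker
    rw [← hxeq, ← hx0eq, hq, map_smul]
  have hfin := Submodule.finrank_mono hle
  rw [finrank_span_singleton hw0ne] at hfin
  omega
end

section
/- Let m ≥ 11 and let the alternating group A_m act naturally on a set Ω, where either Ω is the set of k-element subsets of Δ = {1,…,m} with 2 ≤ k < m/2, or Ω is the set of partitions of Δ into b subsets of size a, for integers a, b ≥ 2 with ab = m. Then the number of A_m-orbits on unordered pairs of distinct elements of Ω is at least 3, unless Ω is the set of 2-element subsets of Δ, in which case this number equals 2. -/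
open scoped Pointwise

open Finset Equiv

/-- `P` is an unordered pair of distinct `k`-element subsets of `{1, ..., m}`. -/
def IsSubsetPair (m k : ℕ) (P : Finset (Finset (Fin m))) : Prop :=
  P.card = 2 ∧ ∀ A ∈ P, A.card = k

/-- Two unordered pairs of distinct `k`-subsets are in the same orbit of the natural
action of the alternating group `A_m`. -/
def subsetPairRel (m k : ℕ) (P Q : {P : Finset (Finset (Fin m)) // IsSubsetPair m k P}) :
    Prop :=
  ∃ g : alternatingGroup (Fin m), (g : Equiv.Perm (Fin m)) • P.1 = Q.1

/-- `P` is a partition of `{1, ..., m}` into `b` subsets of size `a`. -/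
def IsPartitionOf (m a b : ℕ) (P : Finset (Finset (Fin m))) : Prop :=
  P.card = b ∧ (∀ A ∈ P, A.card = a) ∧ ∀ i : Fin m, ∃! A, A ∈ P ∧ i ∈ A

/-- `P` is an unordered pair of distinct partitions of `{1, ..., m}` into `b` subsets of
size `a`. -/
def IsPartitionPair (m a b : ℕ) (P : Finset (Finset (Finset (Fin m)))) : Prop :=
  P.card = 2 ∧ ∀ A ∈ P, IsPartitionOf m a b A

/-- Two unordered pairs of distinct partitions are in the same orbit of the natural
action of the alternating group `A_m`. -/
def partitionPairRel (m a b : ℕ)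
    (P Q : {P : Finset (Finset (Finset (Fin m))) // IsPartitionPair m a b P}) : Prop :=
  ∃ g : alternatingGroup (Fin m), (g : Equiv.Perm (Fin m)) • P.1 = Q.1


lemma matrix_inj3 {α : Type*} {a b c : α} (h1 : a ≠ b) (h2 : a ≠ c) (h3 : b ≠ c) :
    Function.Injective ![a, b, c] := by
  intro i j hij
  fin_cases i <;> fin_cases j <;> simp_all

lemma matrix_inj4 {α : Type*} {a b c d : α} (h1 : a ≠ b) (h2 : a ≠ c) (h3 : a ≠ d)
    (h4 : b ≠ c) (h5 : b ≠ d) (h6 : c ≠ d) : Function.Injective ![a, b, c, d] := by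
  intro i j hij
  fin_cases i <;> fin_cases j <;> simp_all
open scoped Pointwise
open Finset Equiv

section infra
-- (infra lemmas assumed; re-imported by concatenation later)
lemma three_le_natCard {X : Type*} [Finite X] {a b c : X}
    (hab : a ≠ b) (hac : a ≠ c) (hbc : b ≠ c) : 3 ≤ Nat.card X := by
  have hinj : Function.Injective ![a, b, c] := by
    intro i j hij
    fin_cases i <;> fin_cases j <;> simp_all
  simpa using Nat.card_le_card_of_injective _ hinj

lemma natCard_eq_two {X : Type*} {a b : X} (hab : a ≠ b)
    (h : ∀ x : X, x = a ∨ x = b) : Nat.card X = 2 := by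
  rw [Nat.card_eq_two_iff]
  exact ⟨a, b, hab, by ext x; simpa using (h x).imp (by tauto) (by tauto)⟩

lemma perm_smul_finset_eq_image {m : ℕ} (g : Equiv.Perm (Fin m)) (A : Finset (Fin m)) :
    g • A = A.image g := by
  ext x; simp [Finset.mem_smul_finset, Equiv.Perm.smul_def, Finset.mem_image]

lemma exists_perm_eq {n m : ℕ} (x y : Fin n → Fin m)
    (hx : Function.Injective x) (hy : Function.Injective y) :
    ∃ σ : Equiv.Perm (Fin m), ∀ i, σ (x i) = y i := by
  classical
  let e : {z : Fin m // z ∈ Set.range x} ≃ {z : Fin m // z ∈ Set.range y} :=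
    (Equiv.ofInjective x hx).symm.trans (Equiv.ofInjective y hy)
  refine ⟨e.extendSubtype, fun i => ?_⟩
  rw [Equiv.extendSubtype_apply_of_mem e (x i) ⟨i, rfl⟩]
  have h1 : (Equiv.ofInjective x hx).symm ⟨x i, ⟨i, rfl⟩⟩ = i := by
    apply hx
    simp [Equiv.apply_ofInjective_symm]
  simp [e, h1]

lemma exists_even_perm_eq {n m : ℕ} (x y : Fin n → Fin m)
    (hx : Function.Injective x) (hy : Function.Injective y)
    (S : Finset (Fin m)) (hyS : ∀ i, y i ∈ S) (hcard : S.card + 2 ≤ m) :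
    ∃ g : Equiv.Perm (Fin m), g ∈ alternatingGroup (Fin m) ∧ ∀ i, g (x i) = y i := by
  classical
  obtain ⟨σ, hσ⟩ := exists_perm_eq x y hx hy
  have hcompl : 1 < Sᶜ.card := by
    rw [Finset.card_compl]
    have h1 : S.card ≤ Fintype.card (Fin m) := S.card_le_univ.trans_eq (by simp)
    have h2 : Fintype.card (Fin m) = m := by simp
    omega
  obtain ⟨u, hu, v, hv, huv⟩ := Finset.one_lt_card.mp hcompl
  rcases Int.units_eq_one_or (Equiv.Perm.sign σ) with hs | hs
  · exact ⟨σ, Equiv.Perm.mem_alternatingGroup.mpr hs, hσ⟩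
  · refine ⟨Equiv.swap u v * σ, ?_, fun i => ?_⟩
    · rw [Equiv.Perm.mem_alternatingGroup]
      simp [Equiv.Perm.sign_swap huv, hs]
    · simp only [Equiv.Perm.mul_apply, hσ]
      exact Equiv.swap_apply_of_ne_of_ne
        (fun h => (Finset.mem_compl.mp hu) (h ▸ hyS i))
        (fun h => (Finset.mem_compl.mp hv) (h ▸ hyS i))

def afin (m : ℕ) (S : Finset ℕ) : Finset (Fin m) :=
  (S.filter (· < m)).attachFin (fun x hx => (Finset.mem_filter.mp hx).2)

lemma mem_afin {m : ℕ} {S : Finset ℕ} {i : Fin m} : i ∈ afin m S ↔ ↑i ∈ S := by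
  simp [afin, Finset.mem_attachFin, i.isLt]

lemma afin_inter {m : ℕ} (S T : Finset ℕ) : afin m S ∩ afin m T = afin m (S ∩ T) := by
  ext i; simp [mem_afin]

lemma card_afin {m : ℕ} {S : Finset ℕ} (h : ∀ x ∈ S, x < m) : (afin m S).card = S.card := by
  rw [afin, Finset.card_attachFin, Finset.filter_true_of_mem h]

lemma afin_ne {m : ℕ} {S T : Finset ℕ} {x : ℕ} (hx : x < m) (hS : x ∈ S) (hT : x ∉ T) :
    afin m S ≠ afin m T := by
  intro h
  have : (⟨x, hx⟩ : Fin m) ∈ afin m S := mem_afin.mpr hS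
  rw [h] at this
  exact hT (mem_afin.mp this)

lemma pair_inter_card_invariant {m : ℕ} (g : Equiv.Perm (Fin m)) (A B : Finset (Fin m)) :
    ((g • A) ∩ (g • B)).card = (A ∩ B).card := by
  rw [← Finset.smul_finset_inter, Finset.card_smul_finset]

lemma smul_pair {α : Type*} [DecidableEq α] {G : Type*} [Group G] [MulAction G α]
    (g : G) (A B : α) : g • ({A, B} : Finset α) = {g • A, g • B} := by
  simp [Finset.smul_finset_insert, Finset.smul_finset_singleton]

lemma quot_mk_ne {α : Sort*} {β : Sort*} {r : α → α → Prop} (f : α → β)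
    (hf : ∀ a b, r a b → f a = f b) {a b : α} (h : f a ≠ f b) :
    Quot.mk r a ≠ Quot.mk r b :=
  fun he => h (congrArg (Quot.lift f hf) he)
end infra

section subsets
variable {m k : ℕ}

/-- the intersection-cardinality invariant -/
def sInv (m k : ℕ) (P : {P : Finset (Finset (Fin m)) // IsSubsetPair m k P}) : ℕ :=
  (P.1.inf id).card

lemma inf_pair {m : ℕ} (A B : Finset (Fin m)) :
    ({A, B} : Finset (Finset (Fin m))).inf id = A ∩ B := by
  simp [Finset.inf_insert]

lemma sInv_respects (P Q : {P : Finset (Finset (Fin m)) // IsSubsetPair m k P})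
    (h : subsetPairRel m k P Q) : sInv m k P = sInv m k Q := by
  obtain ⟨g, hg⟩ := h
  obtain ⟨A, B, hAB, hP⟩ := Finset.card_eq_two.mp P.2.1
  have hQ : Q.1 = {(g : Equiv.Perm (Fin m)) • A, (g : Equiv.Perm (Fin m)) • B} := by
    rw [← hg, hP, smul_pair]
  unfold sInv
  rw [hP, hQ, inf_pair, inf_pair, pair_inter_card_invariant]

lemma sInv_mk (A B : Finset (Fin m)) (h : IsSubsetPair m k {A, B}) :
    sInv m k ⟨{A, B}, h⟩ = (A ∩ B).card := by
  simp [sInv, inf_pair]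

/-- canonical pair with intersection size j -/
lemma subset_pair_exists (hk : 2 ≤ k) (hmk : 2 * k < m) (j : ℕ) (hj : j < k) :
    IsSubsetPair m k {afin m (Finset.range k),
      afin m (Finset.range j ∪ Finset.Ico k (2 * k - j))} ∧
    (afin m (Finset.range k) ∩
      afin m (Finset.range j ∪ Finset.Ico k (2 * k - j))).card = j := by
  have hne : afin m (Finset.range k) ≠ afin m (Finset.range j ∪ Finset.Ico k (2 * k - j)) := by
    apply afin_ne (x := j) (by omega)
    · simp [hj]
    · simp; omega
  have hinter : (afin m (Finset.range k) ∩
      afin m (Finset.range j ∪ Finset.Ico k (2 * k - j))) = afin m (Finset.range j) := by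
    rw [afin_inter]
    congr 1
    ext x
    simp only [Finset.mem_inter, Finset.mem_range, Finset.mem_union, Finset.mem_Ico]
    omega
  have hbd : ∀ x ∈ Finset.range j ∪ Finset.Ico k (2 * k - j), x < m := by
    intro x hx
    simp only [Finset.mem_union, Finset.mem_range, Finset.mem_Ico] at hx
    omega
  have hdisj : Disjoint (Finset.range j) (Finset.Ico k (2 * k - j)) := by
    rw [Finset.disjoint_left]
    intro x hx hx'
    simp only [Finset.mem_range] at hx
    simp only [Finset.mem_Ico] at hx'
    omega
  refine ⟨⟨Finset.card_pair hne, ?_⟩, ?_⟩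
  · intro A hA
    rcases Finset.mem_insert.mp hA with rfl | hA
    · rw [card_afin (fun x hx => by simp only [Finset.mem_range] at hx; omega)]
      exact Finset.card_range k
    · rw [Finset.mem_singleton.mp hA, card_afin hbd, Finset.card_union_of_disjoint hdisj,
        Finset.card_range, Nat.card_Ico]
      omega
  · rw [hinter, card_afin (fun x hx => by simp only [Finset.mem_range] at hx; omega),
      Finset.card_range]

lemma subsets_three_le (hm : 11 ≤ m) (hk3 : 3 ≤ k) (hmk : 2 * k < m) :
    3 ≤ Nat.card (Quot (subsetPairRel m k)) := by
  have hk : 2 ≤ k := by omega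
  have h0 := subset_pair_exists (m := m) hk hmk 0 (by omega)
  have h1 := subset_pair_exists (m := m) hk hmk 1 (by omega)
  have h2 := subset_pair_exists (m := m) hk hmk 2 (by omega)
  set P0 : {P : Finset (Finset (Fin m)) // IsSubsetPair m k P} := ⟨_, h0.1⟩
  set P1 : {P : Finset (Finset (Fin m)) // IsSubsetPair m k P} := ⟨_, h1.1⟩
  set P2 : {P : Finset (Finset (Fin m)) // IsSubsetPair m k P} := ⟨_, h2.1⟩
  have e0 : sInv m k P0 = 0 := by rw [sInv_mk]; exact h0.2
  have e1 : sInv m k P1 = 1 := by rw [sInv_mk]; exact h1.2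
  have e2 : sInv m k P2 = 2 := by rw [sInv_mk]; exact h2.2
  apply three_le_natCard (a := Quot.mk _ P0) (b := Quot.mk _ P1) (c := Quot.mk _ P2)
  · exact quot_mk_ne _ sInv_respects (by omega)
  · exact quot_mk_ne _ sInv_respects (by omega)
  · exact quot_mk_ne _ sInv_respects (by omega)
end subsets
section ktwo
variable {m : ℕ}

lemma inter_card_le_one {A B : Finset (Fin m)} (hA : A.card = 2) (hB : B.card = 2)
    (hAB : A ≠ B) : (A ∩ B).card ≤ 1 := by
  by_contra h
  push_neg at h
  have h1 : A ∩ B = A := Finset.eq_of_subset_of_card_le Finset.inter_subset_left (by omega)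
  have h2 : A ∩ B = B := Finset.eq_of_subset_of_card_le Finset.inter_subset_right (by omega)
  exact hAB (h1 ▸ h2)

lemma subsets_eq_two (hm : 11 ≤ m) : Nat.card (Quot (subsetPairRel m 2)) = 2 := by
  classical
  have hmpos : 0 < m := by omega
  set e : ℕ → Fin m := fun i => ⟨i % m, Nat.mod_lt _ hmpos⟩ with he_def
  have he : ∀ i, i < 11 → (e i : ℕ) = i := fun i hi => Nat.mod_eq_of_lt (by omega)
  have hene : ∀ i j, i < 11 → j < 11 → i ≠ j → e i ≠ e j := by
    intro i j hi hj hij h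
    apply hij
    have := congrArg Fin.val h
    rwa [he i hi, he j hj] at this
  have d01 := hene 0 1 (by omega) (by omega) (by omega)
  have d02 := hene 0 2 (by omega) (by omega) (by omega)
  have d03 := hene 0 3 (by omega) (by omega) (by omega)
  have d12 := hene 1 2 (by omega) (by omega) (by omega)
  have d13 := hene 1 3 (by omega) (by omega) (by omega)
  have d23 := hene 2 3 (by omega) (by omega) (by omega)
  -- canonical pairs
  have hP0 : IsSubsetPair m 2 {({e 0, e 1} : Finset (Fin m)), {e 2, e 3}} := by
    constructor
    · apply Finset.card_pair
      intro h
      have : e 0 ∈ ({e 2, e 3} : Finset (Fin m)) := by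
        rw [← h]; simp
      simp only [Finset.mem_insert, Finset.mem_singleton] at this
      rcases this with h' | h' <;> [exact d02 h'; exact d03 h']
    · intro A hA
      rcases Finset.mem_insert.mp hA with rfl | hA
      · exact Finset.card_pair d01
      · rw [Finset.mem_singleton.mp hA]; exact Finset.card_pair d23
  have hP1 : IsSubsetPair m 2 {({e 0, e 1} : Finset (Fin m)), {e 0, e 2}} := by
    constructor
    · apply Finset.card_pair
      intro h
      have : e 1 ∈ ({e 0, e 2} : Finset (Fin m)) := by
        rw [← h]; simp
      simp only [Finset.mem_insert, Finset.mem_singleton] at this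
      rcases this with h' | h' <;> [exact d01 h'.symm; exact d12 h']
    · intro A hA
      rcases Finset.mem_insert.mp hA with rfl | hA
      · exact Finset.card_pair d01
      · rw [Finset.mem_singleton.mp hA]; exact Finset.card_pair d02
  set Q0 : {P : Finset (Finset (Fin m)) // IsSubsetPair m 2 P} := ⟨_, hP0⟩
  set Q1 : {P : Finset (Finset (Fin m)) // IsSubsetPair m 2 P} := ⟨_, hP1⟩
  have hi0 : sInv m 2 Q0 = 0 := by
    rw [sInv_mk]
    rw [Finset.card_eq_zero]
    ext z
    simp only [Finset.mem_inter, Finset.mem_insert, Finset.mem_singleton,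
      Finset.notMem_empty, iff_false, not_and]
    rintro (rfl | rfl) (h | h)
    · exact d02 h
    · exact d03 h
    · exact d12 h
    · exact d13 h
  have hi1 : sInv m 2 Q1 = 1 := by
    rw [sInv_mk]
    have heq : ({e 0, e 1} : Finset (Fin m)) ∩ {e 0, e 2} = {e 0} := by
      ext z
      simp only [Finset.mem_inter, Finset.mem_insert, Finset.mem_singleton]
      constructor
      · rintro ⟨rfl | rfl, h | h⟩
        · rfl
        · rfl
        · exact h
        · exact absurd h d12
      · rintro rfl
        exact ⟨Or.inl rfl, Or.inl rfl⟩
    rw [heq, Finset.card_singleton]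
  -- classification of all orbits
  have hclass : ∀ x : Quot (subsetPairRel m 2), x = Quot.mk _ Q0 ∨ x = Quot.mk _ Q1 := by
    apply Quot.ind
    intro P
    obtain ⟨A, B, hAB, hS⟩ := Finset.card_eq_two.mp P.2.1
    have hA : A.card = 2 := P.2.2 A (by rw [hS]; simp)
    have hB : B.card = 2 := P.2.2 B (by rw [hS]; simp)
    have hc := inter_card_le_one hA hB hAB
    have hcard_union : (A ∪ B).card + 2 ≤ m := by
      have := Finset.card_union_le A B
      omega
    interval_cases hval : (A ∩ B).card
    · -- disjoint case
      left
      obtain ⟨p, q, hpq, rfl⟩ := Finset.card_eq_two.mp hA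
      obtain ⟨r, s, hrs, rfl⟩ := Finset.card_eq_two.mp hB
      have hdisj : ∀ z : Fin m, z ∈ ({p, q} : Finset (Fin m)) → z ∈ ({r, s} : Finset (Fin m)) → False := by
        intro z h1 h2
        have : z ∈ ({p,q} : Finset (Fin m)) ∩ {r,s} := Finset.mem_inter.mpr ⟨h1, h2⟩
        rw [Finset.card_eq_zero.mp hval] at this
        exact absurd this (Finset.notMem_empty z)
      have hpr : p ≠ r := fun h => hdisj p (by simp) (by simp [h])
      have hps : p ≠ s := fun h => hdisj p (by simp) (by simp [h])
      have hqr : q ≠ r := fun h => hdisj q (by simp) (by simp [h])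
      have hqs : q ≠ s := fun h => hdisj q (by simp) (by simp [h])
      have hyinj : Function.Injective ![p, q, r, s] := matrix_inj4 hpq hpr hps hqr hqs hrs
      have hxinj : Function.Injective ![e 0, e 1, e 2, e 3] := matrix_inj4 d01 d02 d03 d12 d13 d23
      obtain ⟨g, hgalt, hg⟩ := exists_even_perm_eq ![e 0, e 1, e 2, e 3] ![p, q, r, s]
        hxinj hyinj ({p,q} ∪ {r,s}) (by intro i; fin_cases i <;> simp) hcard_union
      refine (Quot.sound ⟨⟨g, hgalt⟩, ?_⟩).symm
      have h0 := hg 0; have h1 := hg 1; have h2 := hg 2; have h3 := hg 3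
      simp only [Matrix.cons_val_zero, Matrix.cons_val_one, Matrix.head_cons,
        Matrix.cons_val_two, Matrix.tail_cons, Matrix.cons_val_three] at h0 h1 h2 h3
      show g • ({({e 0, e 1} : Finset (Fin m)), {e 2, e 3}}) = P.1
      rw [smul_pair, smul_pair, smul_pair, hS]
      simp only [Equiv.Perm.smul_def, h0, h1, h2, h3]
    · -- intersecting case
      right
      obtain ⟨p, hp⟩ := Finset.card_eq_one.mp hval
      have hpA : p ∈ A := Finset.mem_of_mem_inter_left (hp ▸ Finset.mem_singleton_self p)
      have hpB : p ∈ B := Finset.mem_of_mem_inter_right (hp ▸ Finset.mem_singleton_self p)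
      obtain ⟨u, v, huv, hA'⟩ := Finset.card_eq_two.mp hA
      have hApair : ∃ q, q ≠ p ∧ A = {p, q} := by
        rw [hA'] at hpA
        rcases Finset.mem_insert.mp hpA with rfl | h'
        · exact ⟨v, fun h => huv h.symm, hA'⟩
        · have hvp : v = p := (Finset.mem_singleton.mp h').symm
          subst hvp
          exact ⟨u, fun h => huv h, by rw [hA', Finset.pair_comm]⟩
      obtain ⟨q, hqp, rfl⟩ := hApair
      obtain ⟨u', v', huv', hB'⟩ := Finset.card_eq_two.mp hB
      have hBpair : ∃ r, r ≠ p ∧ B = {p, r} := by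
        rw [hB'] at hpB
        rcases Finset.mem_insert.mp hpB with rfl | h'
        · exact ⟨v', fun h => huv' h.symm, hB'⟩
        · have hvp : v' = p := (Finset.mem_singleton.mp h').symm
          subst hvp
          exact ⟨u', fun h => huv' h, by rw [hB', Finset.pair_comm]⟩
      obtain ⟨r, hrp, rfl⟩ := hBpair
      have hqr : q ≠ r := by
        rintro rfl
        exact hAB rfl
      have hyinj : Function.Injective ![p, q, r] := matrix_inj3 hqp.symm hrp.symm hqr
      have hxinj : Function.Injective ![e 0, e 1, e 2] := matrix_inj3 d01 d02 d12
      obtain ⟨g, hgalt, hg⟩ := exists_even_perm_eq ![e 0, e 1, e 2] ![p, q, r]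
        hxinj hyinj ({p,q} ∪ {p,r}) (by intro i; fin_cases i <;> simp) hcard_union
      refine (Quot.sound ⟨⟨g, hgalt⟩, ?_⟩).symm
      have h0 := hg 0; have h1 := hg 1; have h2 := hg 2
      simp only [Matrix.cons_val_zero, Matrix.cons_val_one, Matrix.head_cons,
        Matrix.cons_val_two, Matrix.tail_cons] at h0 h1 h2
      show g • ({({e 0, e 1} : Finset (Fin m)), {e 0, e 2}}) = P.1
      rw [smul_pair, smul_pair, smul_pair, hS]
      simp only [Equiv.Perm.smul_def, h0, h1, h2]
  exact natCard_eq_two (a := Quot.mk _ Q0) (b := Quot.mk _ Q1)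
    (quot_mk_ne (sInv m 2) sInv_respects (by rw [hi0, hi1]; omega)) hclass
end ktwo
section partitions
variable {m a b : ℕ}

/-- family of b blocks, as subsets of ℕ -/
def GoodFam (m a b : ℕ) (S : ℕ → Finset ℕ) : Prop :=
  (∀ t < b, (S t).card = a) ∧ (∀ t < b, ∀ x ∈ S t, x < m) ∧
  (∀ x < m, ∃ t < b, x ∈ S t) ∧ (∀ t u x, t < b → u < b → x ∈ S t → x ∈ S u → t = u)

def pb (m b : ℕ) (S : ℕ → Finset ℕ) : Finset (Finset (Fin m)) :=
  (Finset.range b).image (fun t => afin m (S t))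

lemma goodFam_inj (ha : 0 < a) {S : ℕ → Finset ℕ} (hS : GoodFam m a b S) :
    ∀ t ∈ Finset.range b, ∀ u ∈ Finset.range b, afin m (S t) = afin m (S u) → t = u := by
  intro t ht u hu h
  rw [Finset.mem_range] at ht hu
  have hcard : 0 < (S t).card := by rw [hS.1 t ht]; omega
  obtain ⟨x, hx⟩ := Finset.card_pos.mp hcard
  have hxm : x < m := hS.2.1 t ht x hx
  have hxu : x ∈ S u := by
    have h1 : (⟨x, hxm⟩ : Fin m) ∈ afin m (S t) := mem_afin.mpr hx
    rw [h] at h1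
    exact mem_afin.mp h1
  exact hS.2.2.2 t u x ht hu hx hxu

lemma pb_isPartition (ha : 0 < a) {S : ℕ → Finset ℕ} (hS : GoodFam m a b S) :
    IsPartitionOf m a b (pb m b S) := by
  refine ⟨?_, ?_, ?_⟩
  · rw [pb, Finset.card_image_of_injOn, Finset.card_range]
    intro t ht u hu h
    exact goodFam_inj ha hS t ht u hu h
  · intro A hA
    obtain ⟨t, ht, rfl⟩ := Finset.mem_image.mp hA
    rw [Finset.mem_range] at ht
    rw [card_afin (hS.2.1 t ht)]
    exact hS.1 t ht
  · intro i
    obtain ⟨t, ht, hx⟩ := hS.2.2.1 i.val i.isLt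
    refine ⟨afin m (S t), ⟨Finset.mem_image_of_mem _ (Finset.mem_range.mpr ht), mem_afin.mpr hx⟩, ?_⟩
    rintro A ⟨hA, hiA⟩
    obtain ⟨u, hu, rfl⟩ := Finset.mem_image.mp hA
    rw [Finset.mem_range] at hu
    have : u = t := hS.2.2.2 u t i.val hu ht (mem_afin.mp hiA) hx
    rw [this]

/-- the standard partition family -/
def stdFam (a : ℕ) : ℕ → Finset ℕ := fun t => Finset.Ico (t * a) (t * a + a)

/-- variant scheme: first r blocks replaced by E -/
def scheme (a r : ℕ) (E : ℕ → Finset ℕ) : ℕ → Finset ℕ :=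
  fun t => if t < r then E t else Finset.Ico (t * a) (t * a + a)

lemma stdFam_eq_scheme : stdFam a = scheme a 0 (fun _ => ∅) := by
  funext t
  simp [stdFam, scheme]

lemma scheme_good (ha : 0 < a) (hab : a * b = m) (r : ℕ) (hr : r ≤ b) (E : ℕ → Finset ℕ)
    (hEcard : ∀ t < r, (E t).card = a)
    (hEsub : ∀ t < r, ∀ x ∈ E t, x < r * a)
    (hEcover : ∀ x < r * a, ∃ t < r, x ∈ E t)
    (hEdisj : ∀ t u x, t < r → u < r → x ∈ E t → x ∈ E u → t = u) :
    GoodFam m a b (scheme a r E) := by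
  have hra : r * a ≤ b * a := Nat.mul_le_mul_right a hr
  have hba : b * a = m := by rw [Nat.mul_comm]; exact hab
  refine ⟨?_, ?_, ?_, ?_⟩
  · intro t ht
    by_cases htr : t < r
    · rw [scheme, if_pos htr]; exact hEcard t htr
    · rw [scheme, if_neg htr, Nat.card_Ico]; omega
  · intro t ht x hx
    by_cases htr : t < r
    · rw [scheme, if_pos htr] at hx
      have := hEsub t htr x hx
      omega
    · rw [scheme, if_neg htr, Finset.mem_Ico] at hx
      have h1 : t + 1 ≤ b := ht
      have h2 : (t + 1) * a ≤ b * a := Nat.mul_le_mul_right a h1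
      rw [Nat.succ_mul] at h2
      omega
  · intro x hx
    by_cases hxr : x < r * a
    · obtain ⟨t, htr, ht⟩ := hEcover x hxr
      exact ⟨t, by omega, by rw [scheme, if_pos htr]; exact ht⟩
    · refine ⟨x / a, ?_, ?_⟩
      · rw [Nat.div_lt_iff_lt_mul ha]
        omega
      · have hge : r ≤ x / a := by
          rw [Nat.le_div_iff_mul_le ha]
          omega
        rw [scheme, if_neg (by omega), Finset.mem_Ico]
        have hdm := Nat.div_add_mod x a
        have hmod : x % a < a := Nat.mod_lt _ ha
        have h1 : x / a * a = a * (x / a) := Nat.mul_comm _ _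
        omega
  · intro t u x ht hu hxt hxu
    by_cases htr : t < r <;> by_cases hur : u < r
    · rw [scheme, if_pos htr] at hxt
      rw [scheme, if_pos hur] at hxu
      exact hEdisj t u x htr hur hxt hxu
    · rw [scheme, if_pos htr] at hxt
      rw [scheme, if_neg hur, Finset.mem_Ico] at hxu
      have h1 := hEsub t htr x hxt
      have h2 : r * a ≤ u * a := Nat.mul_le_mul_right a (by omega)
      omega
    · rw [scheme, if_neg htr, Finset.mem_Ico] at hxt
      rw [scheme, if_pos hur] at hxu
      have h1 := hEsub u hur x hxu
      have h2 : r * a ≤ t * a := Nat.mul_le_mul_right a (by omega)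
      omega
    · rw [scheme, if_neg htr, Finset.mem_Ico] at hxt
      rw [scheme, if_neg hur, Finset.mem_Ico] at hxu
      rcases Nat.lt_trichotomy t u with h | h | h
      · have := Nat.mul_le_mul_right a (show t + 1 ≤ u by omega)
        rw [Nat.succ_mul] at this
        omega
      · exact h
      · have := Nat.mul_le_mul_right a (show u + 1 ≤ t by omega)
        rw [Nat.succ_mul] at this
        omega

lemma stdFam_good (ha : 0 < a) (hab : a * b = m) : GoodFam m a b (stdFam a) := by
  rw [stdFam_eq_scheme]
  exact scheme_good ha hab 0 (by omega) _ (by omega) (by omega) (by intro x hx; omega)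
    (by intro t u x ht; omega)
end partitions
section tinv
variable {m a b : ℕ}

def T2 {m : ℕ} (X Y : Finset (Finset (Fin m))) : ℕ :=
  ∑ A ∈ X, ∑ B ∈ Y, ((A ∩ B).card).choose 2

def tInv {m : ℕ} (P : Finset (Finset (Finset (Fin m)))) : ℕ :=
  ∑ X ∈ P, ∑ Y ∈ P, T2 X Y

lemma T2_smul (g : Equiv.Perm (Fin m)) (X Y : Finset (Finset (Fin m))) :
    T2 (g • X) (g • Y) = T2 X Y := by
  unfold T2
  rw [Finset.smul_finset_def, Finset.smul_finset_def,
    Finset.sum_image (fun x _ y _ h => MulAction.injective g h)]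
  apply Finset.sum_congr rfl
  intro A _
  rw [Finset.sum_image (fun x _ y _ h => MulAction.injective g h)]
  apply Finset.sum_congr rfl
  intro B _
  rw [pair_inter_card_invariant]

lemma tInv_smul (g : Equiv.Perm (Fin m)) (P : Finset (Finset (Finset (Fin m)))) :
    tInv (g • P) = tInv P := by
  unfold tInv
  rw [Finset.smul_finset_def,
    Finset.sum_image (fun x _ y _ h => MulAction.injective g h)]
  apply Finset.sum_congr rfl
  intro X _
  rw [Finset.sum_image (fun x _ y _ h => MulAction.injective g h)]
  apply Finset.sum_congr rfl
  intro Y _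
  exact T2_smul g X Y

lemma tInv_respects (P Q : {P : Finset (Finset (Finset (Fin m))) // IsPartitionPair m a b P})
    (h : partitionPairRel m a b P Q) : tInv P.1 = tInv Q.1 := by
  obtain ⟨g, hg⟩ := h
  rw [← hg, tInv_smul]

lemma T2_comm (X Y : Finset (Finset (Fin m))) : T2 X Y = T2 Y X := by
  unfold T2
  rw [Finset.sum_comm]
  apply Finset.sum_congr rfl
  intro B _
  apply Finset.sum_congr rfl
  intro A _
  rw [Finset.inter_comm]

lemma T2_self {X : Finset (Finset (Fin m))} (hX : IsPartitionOf m a b X) :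
    T2 X X = b * a.choose 2 := by
  unfold T2
  have hrow : ∀ A ∈ X, (∑ B ∈ X, ((A ∩ B).card).choose 2) = a.choose 2 := by
    intro A hA
    rw [Finset.sum_eq_single_of_mem A hA]
    · rw [Finset.inter_self, hX.2.1 A hA]
    · intro B hB hBA
      have hempty : A ∩ B = ∅ := by
        by_contra h
        obtain ⟨x, hx⟩ := Finset.nonempty_iff_ne_empty.mpr h
        rw [Finset.mem_inter] at hx
        obtain ⟨C, _, huniq⟩ := hX.2.2 x
        exact hBA ((huniq B ⟨hB, hx.2⟩).trans (huniq A ⟨hA, hx.1⟩).symm)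
      rw [hempty]
      simp
  rw [Finset.sum_congr rfl hrow, Finset.sum_const, hX.1, smul_eq_mul]

lemma tInv_pair {X Y : Finset (Finset (Fin m))} (hXY : X ≠ Y) :
    tInv {X, Y} = T2 X X + T2 Y Y + 2 * T2 X Y := by
  unfold tInv
  rw [Finset.sum_pair hXY, Finset.sum_pair hXY, Finset.sum_pair hXY, T2_comm Y X]
  ring

lemma T2_pb {S S' : ℕ → Finset ℕ} (ha : 0 < a) (hS : GoodFam m a b S)
    (hS' : GoodFam m a b S') :
    T2 (pb m b S) (pb m b S') =
      ∑ t ∈ Finset.range b, ∑ u ∈ Finset.range b, ((S t ∩ S' u).card).choose 2 := by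
  unfold T2 pb
  rw [Finset.sum_image (goodFam_inj ha hS)]
  apply Finset.sum_congr rfl
  intro t ht
  rw [Finset.sum_image (goodFam_inj ha hS')]
  apply Finset.sum_congr rfl
  intro u hu
  rw [afin_inter, card_afin]
  intro x hx
  rw [Finset.mem_inter] at hx
  exact hS.2.1 t (Finset.mem_range.mp ht) x hx.1
end tinv
section schemeT2
variable {m a b : ℕ}

lemma std_inter_empty (a : ℕ) {t u : ℕ} (h : t ≠ u) :
    Finset.Ico (t * a) (t * a + a) ∩ Finset.Ico (u * a) (u * a + a) = ∅ := by
  rw [Finset.eq_empty_iff_forall_notMem]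
  intro x hx
  rw [Finset.mem_inter, Finset.mem_Ico, Finset.mem_Ico] at hx
  rcases Nat.lt_trichotomy t u with h' | h' | h'
  · have := Nat.mul_le_mul_right a (show t + 1 ≤ u by omega)
    rw [Nat.succ_mul] at this
    omega
  · exact h h'
  · have := Nat.mul_le_mul_right a (show u + 1 ≤ t by omega)
    rw [Nat.succ_mul] at this
    omega

lemma scheme_T2 (ha : 0 < a) (hab : a * b = m) {r : ℕ} (hr : r ≤ b) {E : ℕ → Finset ℕ}
    (hS' : GoodFam m a b (scheme a r E))
    (hsmall : ∀ t u, r ≤ t → t < b → u < r →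
      (Finset.Ico (t * a) (t * a + a) ∩ E u).card ≤ 1) :
    T2 (pb m b (stdFam a)) (pb m b (scheme a r E)) =
      (∑ t ∈ Finset.range r, ∑ u ∈ Finset.range r,
        ((Finset.Ico (t * a) (t * a + a) ∩ E u).card).choose 2)
      + (b - r) * a.choose 2 := by
  rw [T2_pb ha (stdFam_good ha hab) hS']
  have hrow_hi : ∀ t, r ≤ t → t < b →
      (∑ u ∈ Finset.range b, ((stdFam a t ∩ scheme a r E u).card).choose 2) = a.choose 2 := by
    intro t htr htb
    rw [Finset.sum_eq_single_of_mem t (Finset.mem_range.mpr htb)]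
    · rw [scheme, if_neg (by omega), stdFam, Finset.inter_self, Nat.card_Ico]
      congr 1
      omega
    · intro u _ hut
      by_cases hur : u < r
      · apply Nat.choose_eq_zero_of_lt
        have := hsmall t u htr htb hur
        rw [stdFam, scheme, if_pos hur]
        omega
      · rw [stdFam, scheme, if_neg hur, std_inter_empty a (show t ≠ u from fun hh => hut hh.symm)]
        simp
  have hrow_lo : ∀ t, t < r →
      (∑ u ∈ Finset.range b, ((stdFam a t ∩ scheme a r E u).card).choose 2) =
      ∑ u ∈ Finset.range r, ((Finset.Ico (t * a) (t * a + a) ∩ E u).card).choose 2 := by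
    intro t htr
    rw [← Finset.sum_subset (Finset.range_subset_range.mpr hr)]
    · apply Finset.sum_congr rfl
      intro u hu
      rw [Finset.mem_range] at hu
      rw [stdFam, scheme, if_pos hu]
    · intro u _ hunotin
      rw [Finset.mem_range, not_lt] at hunotin
      rw [stdFam, scheme, if_neg (by omega), std_inter_empty a (show t ≠ u by omega)]
      simp
  have hsplit : ∀ g : ℕ → ℕ, ∑ t ∈ Finset.range b, g t =
      (∑ t ∈ Finset.range r, g t) + ∑ t ∈ Finset.Ico r b, g t := by
    intro g
    rw [Finset.range_eq_Ico, ← Finset.sum_Ico_consecutive g (Nat.zero_le r) hr]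
    rw [Finset.range_eq_Ico]
  rw [hsplit]
  congr 1
  · apply Finset.sum_congr rfl
    intro t ht
    exact hrow_lo t (Finset.mem_range.mp ht)
  · have h1 : ∑ t ∈ Finset.Ico r b, (∑ u ∈ Finset.range b,
        ((stdFam a t ∩ scheme a r E u).card).choose 2) =
        ∑ _t ∈ Finset.Ico r b, a.choose 2 := by
      apply Finset.sum_congr rfl
      intro t ht
      rw [Finset.mem_Ico] at ht
      exact hrow_hi t ht.1 ht.2
    rw [h1, Finset.sum_const, Nat.card_Ico, smul_eq_mul]
end schemeT2
section swap
variable {m a b : ℕ}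

def Eswap (a i : ℕ) : ℕ → Finset ℕ := fun t =>
  if t = 0 then Finset.Ico i (a + i) else Finset.Ico 0 i ∪ Finset.Ico (a + i) (2 * a)

lemma Eswap_zero {i : ℕ} : Eswap a i 0 = Finset.Ico i (a + i) := rfl

lemma Eswap_pos {i t : ℕ} (h : t ≠ 0) :
    Eswap a i t = Finset.Ico 0 i ∪ Finset.Ico (a + i) (2 * a) := by
  rw [Eswap, if_neg h]

lemma mem_Eswap_zero {i x : ℕ} : x ∈ Eswap a i 0 ↔ i ≤ x ∧ x < a + i := by
  rw [Eswap_zero, Finset.mem_Ico]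

lemma mem_Eswap_pos {i t x : ℕ} (h : t ≠ 0) :
    x ∈ Eswap a i t ↔ x < i ∨ (a + i ≤ x ∧ x < 2 * a) := by
  rw [Eswap_pos h, Finset.mem_union, Finset.mem_Ico, Finset.mem_Ico]
  omega

lemma Eswap_good (ha : 0 < a) (hb : 2 ≤ b) (hab : a * b = m) {i : ℕ}
    (hi1 : 1 ≤ i) (hia : i < a) :
    GoodFam m a b (scheme a 2 (Eswap a i)) := by
  apply scheme_good ha hab 2 hb
  · intro t ht
    by_cases h0 : t = 0
    · rw [h0, Eswap_zero, Nat.card_Ico]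
      omega
    · rw [Eswap_pos h0, Finset.card_union_of_disjoint, Nat.card_Ico, Nat.card_Ico]
      · omega
      · rw [Finset.disjoint_left]
        intro x hx hx'
        rw [Finset.mem_Ico] at hx hx'
        omega
  · intro t ht x hx
    by_cases h0 : t = 0
    · rw [h0, mem_Eswap_zero] at hx; omega
    · rw [mem_Eswap_pos h0] at hx; omega
  · intro x hx
    by_cases hc : i ≤ x ∧ x < a + i
    · exact ⟨0, by omega, mem_Eswap_zero.mpr hc⟩
    · exact ⟨1, by omega, (mem_Eswap_pos one_ne_zero).mpr (by omega)⟩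
  · intro t u x ht hu hxt hxu
    by_cases h0 : t = 0 <;> by_cases h1 : u = 0
    · omega
    · rw [h0, mem_Eswap_zero] at hxt
      rw [mem_Eswap_pos h1] at hxu
      omega
    · rw [mem_Eswap_pos h0] at hxt
      rw [h1, mem_Eswap_zero] at hxu
      omega
    · omega

lemma swap_T2_val (ha2 : 2 ≤ a) (hb : 2 ≤ b) (hab : a * b = m) {i : ℕ}
    (hi1 : 1 ≤ i) (hia : i < a) :
    T2 (pb m b (stdFam a)) (pb m b (scheme a 2 (Eswap a i))) =
      2 * ((a - i).choose 2) + 2 * i.choose 2 + (b - 2) * a.choose 2 := by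
  have ha : 0 < a := by omega
  rw [scheme_T2 ha hab hb (Eswap_good ha hb hab hi1 hia) ?hsmall]
  case hsmall =>
    intro t u htr htb hur
    have h2a : 2 * a ≤ t * a := Nat.mul_le_mul_right a htr
    apply Finset.card_le_one.mpr
    intro x hx y hy
    exfalso
    rw [Finset.mem_inter, Finset.mem_Ico] at hx
    have hxE := hx.2
    by_cases h0 : u = 0
    · rw [h0, mem_Eswap_zero] at hxE; omega
    · rw [mem_Eswap_pos h0] at hxE; omega
  have e00 : (Finset.Ico (0 * a) (0 * a + a) ∩ Eswap a i 0).card = a - i := by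
    have h : Finset.Ico (0 * a) (0 * a + a) ∩ Eswap a i 0 = Finset.Ico i a := by
      ext x
      rw [Finset.mem_inter, Finset.mem_Ico, mem_Eswap_zero, Finset.mem_Ico]
      omega
    rw [h, Nat.card_Ico]
  have e01 : (Finset.Ico (0 * a) (0 * a + a) ∩ Eswap a i 1).card = i := by
    have h : Finset.Ico (0 * a) (0 * a + a) ∩ Eswap a i 1 = Finset.Ico 0 i := by
      ext x
      rw [Finset.mem_inter, Finset.mem_Ico, mem_Eswap_pos one_ne_zero, Finset.mem_Ico]
      omega
    rw [h, Nat.card_Ico]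
    omega
  have e10 : (Finset.Ico (1 * a) (1 * a + a) ∩ Eswap a i 0).card = i := by
    have h : Finset.Ico (1 * a) (1 * a + a) ∩ Eswap a i 0 = Finset.Ico a (a + i) := by
      ext x
      rw [Finset.mem_inter, Finset.mem_Ico, mem_Eswap_zero, Finset.mem_Ico]
      omega
    rw [h, Nat.card_Ico]
    omega
  have e11 : (Finset.Ico (1 * a) (1 * a + a) ∩ Eswap a i 1).card = a - i := by
    have h : Finset.Ico (1 * a) (1 * a + a) ∩ Eswap a i 1 = Finset.Ico (a + i) (2 * a) := by
      ext x
      rw [Finset.mem_inter, Finset.mem_Ico, mem_Eswap_pos one_ne_zero, Finset.mem_Ico]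
      omega
    rw [h, Nat.card_Ico]
    omega
  rw [Finset.sum_range_succ, Finset.sum_range_succ, Finset.sum_range_zero,
    Finset.sum_range_succ, Finset.sum_range_succ, Finset.sum_range_zero,
    Finset.sum_range_succ, Finset.sum_range_succ, Finset.sum_range_zero,
    e00, e01, e10, e11]
  omega

lemma swap_ne_std (ha2 : 2 ≤ a) (hb : 2 ≤ b) (hab : a * b = m) {i : ℕ}
    (hi1 : 1 ≤ i) (hia : i < a) :
    pb m b (stdFam a) ≠ pb m b (scheme a 2 (Eswap a i)) := by
  intro h
  have hmem : afin m (scheme a 2 (Eswap a i) 0) ∈ pb m b (scheme a 2 (Eswap a i)) :=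
    Finset.mem_image_of_mem _ (Finset.mem_range.mpr (by omega))
  rw [← h] at hmem
  obtain ⟨t, ht, heq⟩ := Finset.mem_image.mp hmem
  rw [Finset.mem_range] at ht
  have hIm : ∀ x : ℕ, x ∈ scheme a 2 (Eswap a i) 0 → x < m → x ∈ stdFam a t := by
    intro x hx hxm
    have h1 : (⟨x, hxm⟩ : Fin m) ∈ afin m (scheme a 2 (Eswap a i) 0) := mem_afin.mpr hx
    rw [← heq] at h1
    exact mem_afin.mp h1
  have hma : 2 * a ≤ m := by
    calc 2 * a = a * 2 := Nat.mul_comm 2 a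
    _ ≤ a * b := Nat.mul_le_mul_left a hb
    _ = m := hab
  have hscheme0 : scheme a 2 (Eswap a i) 0 = Eswap a i 0 := by
    rw [scheme, if_pos (by omega : (0:ℕ) < 2)]
  have hamem : (a : ℕ) ∈ scheme a 2 (Eswap a i) 0 := by
    rw [hscheme0, mem_Eswap_zero]
    omega
  have himem : (i : ℕ) ∈ scheme a 2 (Eswap a i) 0 := by
    rw [hscheme0, mem_Eswap_zero]
    omega
  have ha' := hIm a hamem (by omega)
  have hi' := hIm i himem (by omega)
  simp only [stdFam, Finset.mem_Ico] at ha' hi'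
  by_cases ht1 : 1 ≤ t
  · have h1 : 1 * a ≤ t * a := Nat.mul_le_mul_right a ht1
    rw [Nat.one_mul] at h1
    omega
  · have ht0 : t = 0 := by omega
    rw [ht0, Nat.zero_mul] at ha'
    omega
end swap
section cyc3
variable {m a b : ℕ}

def Ecyc3 (a : ℕ) : ℕ → Finset ℕ := fun t =>
  if t = 0 then insert (2 * a) (Finset.Ico 1 a)
  else if t = 1 then insert 0 (Finset.Ico (a + 1) (2 * a))
  else insert a (Finset.Ico (2 * a + 1) (3 * a))

lemma mem_Ecyc3_0 {x : ℕ} : x ∈ Ecyc3 a 0 ↔ x = 2 * a ∨ (1 ≤ x ∧ x < a) := by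
  simp [Ecyc3, Finset.mem_insert, Finset.mem_Ico]

lemma mem_Ecyc3_1 {x : ℕ} : x ∈ Ecyc3 a 1 ↔ x = 0 ∨ (a + 1 ≤ x ∧ x < 2 * a) := by
  simp [Ecyc3, Finset.mem_insert, Finset.mem_Ico]

lemma mem_Ecyc3_2 {x : ℕ} : x ∈ Ecyc3 a 2 ↔ x = a ∨ (2 * a + 1 ≤ x ∧ x < 3 * a) := by
  simp [Ecyc3, Finset.mem_insert, Finset.mem_Ico]

lemma Ecyc3_good (ha : 2 ≤ a) (hb : 3 ≤ b) (hab : a * b = m) :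
    GoodFam m a b (scheme a 3 (Ecyc3 a)) := by
  apply scheme_good (by omega) hab 3 hb
  · intro t ht
    interval_cases t
    · rw [show Ecyc3 a 0 = insert (2 * a) (Finset.Ico 1 a) from rfl,
        Finset.card_insert_of_notMem (by rw [Finset.mem_Ico]; omega), Nat.card_Ico]
      omega
    · rw [show Ecyc3 a 1 = insert 0 (Finset.Ico (a + 1) (2 * a)) from rfl,
        Finset.card_insert_of_notMem (by rw [Finset.mem_Ico]; omega), Nat.card_Ico]
      omega
    · rw [show Ecyc3 a 2 = insert a (Finset.Ico (2 * a + 1) (3 * a)) from rfl,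
        Finset.card_insert_of_notMem (by rw [Finset.mem_Ico]; omega), Nat.card_Ico]
      omega
  · intro t ht x hx
    interval_cases t
    · rw [mem_Ecyc3_0] at hx; omega
    · rw [mem_Ecyc3_1] at hx; omega
    · rw [mem_Ecyc3_2] at hx; omega
  · intro x hx
    by_cases h0 : x = 0
    · exact ⟨1, by omega, mem_Ecyc3_1.mpr (by omega)⟩
    by_cases h1 : x < a
    · exact ⟨0, by omega, mem_Ecyc3_0.mpr (by omega)⟩
    by_cases h2 : x = a
    · exact ⟨2, by omega, mem_Ecyc3_2.mpr (by omega)⟩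
    by_cases h3 : x < 2 * a
    · exact ⟨1, by omega, mem_Ecyc3_1.mpr (by omega)⟩
    by_cases h4 : x = 2 * a
    · exact ⟨0, by omega, mem_Ecyc3_0.mpr (by omega)⟩
    · exact ⟨2, by omega, mem_Ecyc3_2.mpr (by omega)⟩
  · intro t u x ht hu hxt hxu
    interval_cases t <;> interval_cases u <;>
      simp only [mem_Ecyc3_0, mem_Ecyc3_1, mem_Ecyc3_2] at hxt hxu <;> omega

lemma cyc3_T2_val (ha2 : 2 ≤ a) (hb : 3 ≤ b) (hab : a * b = m) :
    T2 (pb m b (stdFam a)) (pb m b (scheme a 3 (Ecyc3 a))) =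
      3 * ((a - 1).choose 2) + (b - 3) * a.choose 2 := by
  rw [scheme_T2 (by omega) hab hb (Ecyc3_good ha2 hb hab) ?hsmall]
  case hsmall =>
    intro t u htr htb hur
    have h3a : 3 * a ≤ t * a := Nat.mul_le_mul_right a htr
    apply Finset.card_le_one.mpr
    intro x hx y hy
    exfalso
    rw [Finset.mem_inter, Finset.mem_Ico] at hx
    have hxE := hx.2
    interval_cases u <;>
      simp only [mem_Ecyc3_0, mem_Ecyc3_1, mem_Ecyc3_2] at hxE <;> omega
  have d0 : (Finset.Ico (0 * a) (0 * a + a) ∩ Ecyc3 a 0).card = a - 1 := by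
    have h : Finset.Ico (0 * a) (0 * a + a) ∩ Ecyc3 a 0 = Finset.Ico 1 a := by
      ext x
      rw [Finset.mem_inter, Finset.mem_Ico, mem_Ecyc3_0, Finset.mem_Ico]
      omega
    rw [h, Nat.card_Ico]
  have d1 : (Finset.Ico (1 * a) (1 * a + a) ∩ Ecyc3 a 1).card = a - 1 := by
    have h : Finset.Ico (1 * a) (1 * a + a) ∩ Ecyc3 a 1 = Finset.Ico (a + 1) (2 * a) := by
      ext x
      rw [Finset.mem_inter, Finset.mem_Ico, mem_Ecyc3_1, Finset.mem_Ico]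
      omega
    rw [h, Nat.card_Ico]
    omega
  have d2 : (Finset.Ico (2 * a) (2 * a + a) ∩ Ecyc3 a 2).card = a - 1 := by
    have h : Finset.Ico (2 * a) (2 * a + a) ∩ Ecyc3 a 2 = Finset.Ico (2 * a + 1) (3 * a) := by
      ext x
      rw [Finset.mem_inter, Finset.mem_Ico, mem_Ecyc3_2, Finset.mem_Ico]
      omega
    rw [h, Nat.card_Ico]
    omega
  have o01 : ((Finset.Ico (0 * a) (0 * a + a) ∩ Ecyc3 a 1).card).choose 2 = 0 := by
    apply Nat.choose_eq_zero_of_lt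
    have h : (Finset.Ico (0 * a) (0 * a + a) ∩ Ecyc3 a 1).card ≤ 1 := by
      apply Finset.card_le_one.mpr
      intro x hx y hy
      rw [Finset.mem_inter, Finset.mem_Ico, mem_Ecyc3_1] at hx hy
      omega
    omega
  have o02 : ((Finset.Ico (0 * a) (0 * a + a) ∩ Ecyc3 a 2).card).choose 2 = 0 := by
    apply Nat.choose_eq_zero_of_lt
    have h : (Finset.Ico (0 * a) (0 * a + a) ∩ Ecyc3 a 2).card ≤ 1 := by
      apply Finset.card_le_one.mpr
      intro x hx y hy
      rw [Finset.mem_inter, Finset.mem_Ico, mem_Ecyc3_2] at hx hy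
      omega
    omega
  have o10 : ((Finset.Ico (1 * a) (1 * a + a) ∩ Ecyc3 a 0).card).choose 2 = 0 := by
    apply Nat.choose_eq_zero_of_lt
    have h : (Finset.Ico (1 * a) (1 * a + a) ∩ Ecyc3 a 0).card ≤ 1 := by
      apply Finset.card_le_one.mpr
      intro x hx y hy
      rw [Finset.mem_inter, Finset.mem_Ico, mem_Ecyc3_0] at hx hy
      omega
    omega
  have o12 : ((Finset.Ico (1 * a) (1 * a + a) ∩ Ecyc3 a 2).card).choose 2 = 0 := by
    apply Nat.choose_eq_zero_of_lt
    have h : (Finset.Ico (1 * a) (1 * a + a) ∩ Ecyc3 a 2).card ≤ 1 := by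
      apply Finset.card_le_one.mpr
      intro x hx y hy
      rw [Finset.mem_inter, Finset.mem_Ico, mem_Ecyc3_2] at hx hy
      omega
    omega
  have o20 : ((Finset.Ico (2 * a) (2 * a + a) ∩ Ecyc3 a 0).card).choose 2 = 0 := by
    apply Nat.choose_eq_zero_of_lt
    have h : (Finset.Ico (2 * a) (2 * a + a) ∩ Ecyc3 a 0).card ≤ 1 := by
      apply Finset.card_le_one.mpr
      intro x hx y hy
      rw [Finset.mem_inter, Finset.mem_Ico, mem_Ecyc3_0] at hx hy
      omega
    omega
  have o21 : ((Finset.Ico (2 * a) (2 * a + a) ∩ Ecyc3 a 1).card).choose 2 = 0 := by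
    apply Nat.choose_eq_zero_of_lt
    have h : (Finset.Ico (2 * a) (2 * a + a) ∩ Ecyc3 a 1).card ≤ 1 := by
      apply Finset.card_le_one.mpr
      intro x hx y hy
      rw [Finset.mem_inter, Finset.mem_Ico, mem_Ecyc3_1] at hx hy
      omega
    omega
  simp only [Finset.sum_range_succ, Finset.sum_range_zero]
  rw [d0, d1, d2, o01, o02, o10, o12, o20, o21]
  omega

lemma cyc3_ne_std (ha2 : 2 ≤ a) (hb : 3 ≤ b) (hab : a * b = m) :
    pb m b (stdFam a) ≠ pb m b (scheme a 3 (Ecyc3 a)) := by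
  intro h
  have hmem : afin m (scheme a 3 (Ecyc3 a) 0) ∈ pb m b (scheme a 3 (Ecyc3 a)) :=
    Finset.mem_image_of_mem _ (Finset.mem_range.mpr (by omega))
  rw [← h] at hmem
  obtain ⟨t, ht, heq⟩ := Finset.mem_image.mp hmem
  rw [Finset.mem_range] at ht
  have hIm : ∀ x : ℕ, x ∈ scheme a 3 (Ecyc3 a) 0 → x < m → x ∈ stdFam a t := by
    intro x hx hxm
    have h1 : (⟨x, hxm⟩ : Fin m) ∈ afin m (scheme a 3 (Ecyc3 a) 0) := mem_afin.mpr hx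
    rw [← heq] at h1
    exact mem_afin.mp h1
  have hma : 3 * a ≤ m := by
    calc 3 * a = a * 3 := Nat.mul_comm 3 a
    _ ≤ a * b := Nat.mul_le_mul_left a hb
    _ = m := hab
  have hscheme0 : scheme a 3 (Ecyc3 a) 0 = Ecyc3 a 0 := by
    rw [scheme, if_pos (by omega : (0:ℕ) < 3)]
  have h1mem : (1 : ℕ) ∈ scheme a 3 (Ecyc3 a) 0 := by
    rw [hscheme0, mem_Ecyc3_0]
    omega
  have h2amem : (2 * a : ℕ) ∈ scheme a 3 (Ecyc3 a) 0 := by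
    rw [hscheme0, mem_Ecyc3_0]
    omega
  have h1' := hIm 1 h1mem (by omega)
  have h2a' := hIm (2 * a) h2amem (by omega)
  simp only [stdFam, Finset.mem_Ico] at h1' h2a'
  by_cases ht1 : 1 ≤ t
  · have hh : 1 * a ≤ t * a := Nat.mul_le_mul_right a ht1
    rw [Nat.one_mul] at hh
    omega
  · have ht0 : t = 0 := by omega
    rw [ht0, Nat.zero_mul] at h2a'
    omega
end cyc3
section cyc4
variable {m a b : ℕ}

def Ecyc4 (a : ℕ) : ℕ → Finset ℕ := fun t =>
  if t = 0 then insert (3 * a) (Finset.Ico 1 a)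
  else if t = 1 then insert 0 (Finset.Ico (a + 1) (2 * a))
  else if t = 2 then insert a (Finset.Ico (2 * a + 1) (3 * a))
  else insert (2 * a) (Finset.Ico (3 * a + 1) (4 * a))

lemma mem_Ecyc4_0 {x : ℕ} : x ∈ Ecyc4 a 0 ↔ x = 3 * a ∨ (1 ≤ x ∧ x < a) := by
  simp [Ecyc4, Finset.mem_insert, Finset.mem_Ico]

lemma mem_Ecyc4_1 {x : ℕ} : x ∈ Ecyc4 a 1 ↔ x = 0 ∨ (a + 1 ≤ x ∧ x < 2 * a) := by
  simp [Ecyc4, Finset.mem_insert, Finset.mem_Ico]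

lemma mem_Ecyc4_2 {x : ℕ} : x ∈ Ecyc4 a 2 ↔ x = a ∨ (2 * a + 1 ≤ x ∧ x < 3 * a) := by
  simp [Ecyc4, Finset.mem_insert, Finset.mem_Ico]

lemma mem_Ecyc4_3 {x : ℕ} : x ∈ Ecyc4 a 3 ↔ x = 2 * a ∨ (3 * a + 1 ≤ x ∧ x < 4 * a) := by
  simp [Ecyc4, Finset.mem_insert, Finset.mem_Ico]

lemma Ecyc4_good (ha : 2 ≤ a) (hb : 4 ≤ b) (hab : a * b = m) :
    GoodFam m a b (scheme a 4 (Ecyc4 a)) := by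
  apply scheme_good (by omega) hab 4 hb
  · intro t ht
    interval_cases t
    · rw [show Ecyc4 a 0 = insert (3 * a) (Finset.Ico 1 a) from rfl,
        Finset.card_insert_of_notMem (by rw [Finset.mem_Ico]; omega), Nat.card_Ico]
      omega
    · rw [show Ecyc4 a 1 = insert 0 (Finset.Ico (a + 1) (2 * a)) from rfl,
        Finset.card_insert_of_notMem (by rw [Finset.mem_Ico]; omega), Nat.card_Ico]
      omega
    · rw [show Ecyc4 a 2 = insert a (Finset.Ico (2 * a + 1) (3 * a)) from rfl,
        Finset.card_insert_of_notMem (by rw [Finset.mem_Ico]; omega), Nat.card_Ico]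
      omega
    · rw [show Ecyc4 a 3 = insert (2 * a) (Finset.Ico (3 * a + 1) (4 * a)) from rfl,
        Finset.card_insert_of_notMem (by rw [Finset.mem_Ico]; omega), Nat.card_Ico]
      omega
  · intro t ht x hx
    interval_cases t
    · rw [mem_Ecyc4_0] at hx; omega
    · rw [mem_Ecyc4_1] at hx; omega
    · rw [mem_Ecyc4_2] at hx; omega
    · rw [mem_Ecyc4_3] at hx; omega
  · intro x hx
    by_cases h0 : x = 0
    · exact ⟨1, by omega, mem_Ecyc4_1.mpr (by omega)⟩
    by_cases h1 : x < a
    · exact ⟨0, by omega, mem_Ecyc4_0.mpr (by omega)⟩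
    by_cases h2 : x = a
    · exact ⟨2, by omega, mem_Ecyc4_2.mpr (by omega)⟩
    by_cases h3 : x < 2 * a
    · exact ⟨1, by omega, mem_Ecyc4_1.mpr (by omega)⟩
    by_cases h4 : x = 2 * a
    · exact ⟨3, by omega, mem_Ecyc4_3.mpr (by omega)⟩
    by_cases h5 : x < 3 * a
    · exact ⟨2, by omega, mem_Ecyc4_2.mpr (by omega)⟩
    by_cases h6 : x = 3 * a
    · exact ⟨0, by omega, mem_Ecyc4_0.mpr (by omega)⟩
    · exact ⟨3, by omega, mem_Ecyc4_3.mpr (by omega)⟩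
  · intro t u x ht hu hxt hxu
    interval_cases t <;> interval_cases u <;>
      simp only [mem_Ecyc4_0, mem_Ecyc4_1, mem_Ecyc4_2, mem_Ecyc4_3] at hxt hxu <;> omega

lemma cyc4_T2_val (ha2 : 2 ≤ a) (hb : 4 ≤ b) (hab : a * b = m) :
    T2 (pb m b (stdFam a)) (pb m b (scheme a 4 (Ecyc4 a))) =
      4 * ((a - 1).choose 2) + (b - 4) * a.choose 2 := by
  rw [scheme_T2 (by omega) hab hb (Ecyc4_good ha2 hb hab) ?hsmall]
  case hsmall =>
    intro t u htr htb hur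
    have h4a : 4 * a ≤ t * a := Nat.mul_le_mul_right a htr
    apply Finset.card_le_one.mpr
    intro x hx y hy
    exfalso
    rw [Finset.mem_inter, Finset.mem_Ico] at hx
    have hxE := hx.2
    interval_cases u <;>
      simp only [mem_Ecyc4_0, mem_Ecyc4_1, mem_Ecyc4_2, mem_Ecyc4_3] at hxE <;> omega
  have d0 : (Finset.Ico (0 * a) (0 * a + a) ∩ Ecyc4 a 0).card = a - 1 := by
    have h : Finset.Ico (0 * a) (0 * a + a) ∩ Ecyc4 a 0 = Finset.Ico 1 a := by
      ext x
      rw [Finset.mem_inter, Finset.mem_Ico, mem_Ecyc4_0, Finset.mem_Ico]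
      omega
    rw [h, Nat.card_Ico]
    try omega
  have d1 : (Finset.Ico (1 * a) (1 * a + a) ∩ Ecyc4 a 1).card = a - 1 := by
    have h : Finset.Ico (1 * a) (1 * a + a) ∩ Ecyc4 a 1 = Finset.Ico (a + 1) (2 * a) := by
      ext x
      rw [Finset.mem_inter, Finset.mem_Ico, mem_Ecyc4_1, Finset.mem_Ico]
      omega
    rw [h, Nat.card_Ico]
    try omega
  have d2 : (Finset.Ico (2 * a) (2 * a + a) ∩ Ecyc4 a 2).card = a - 1 := by
    have h : Finset.Ico (2 * a) (2 * a + a) ∩ Ecyc4 a 2 = Finset.Ico (2 * a + 1) (3 * a) := by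
      ext x
      rw [Finset.mem_inter, Finset.mem_Ico, mem_Ecyc4_2, Finset.mem_Ico]
      omega
    rw [h, Nat.card_Ico]
    try omega
  have d3 : (Finset.Ico (3 * a) (3 * a + a) ∩ Ecyc4 a 3).card = a - 1 := by
    have h : Finset.Ico (3 * a) (3 * a + a) ∩ Ecyc4 a 3 = Finset.Ico (3 * a + 1) (4 * a) := by
      ext x
      rw [Finset.mem_inter, Finset.mem_Ico, mem_Ecyc4_3, Finset.mem_Ico]
      omega
    rw [h, Nat.card_Ico]
    try omega
  have o01 : ((Finset.Ico (0 * a) (0 * a + a) ∩ Ecyc4 a 1).card).choose 2 = 0 := by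
    apply Nat.choose_eq_zero_of_lt
    have h : (Finset.Ico (0 * a) (0 * a + a) ∩ Ecyc4 a 1).card ≤ 1 := by
      apply Finset.card_le_one.mpr
      intro x hx y hy
      rw [Finset.mem_inter, Finset.mem_Ico, mem_Ecyc4_1] at hx hy
      omega
    omega
  have o02 : ((Finset.Ico (0 * a) (0 * a + a) ∩ Ecyc4 a 2).card).choose 2 = 0 := by
    apply Nat.choose_eq_zero_of_lt
    have h : (Finset.Ico (0 * a) (0 * a + a) ∩ Ecyc4 a 2).card ≤ 1 := by
      apply Finset.card_le_one.mpr
      intro x hx y hy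
      rw [Finset.mem_inter, Finset.mem_Ico, mem_Ecyc4_2] at hx hy
      omega
    omega
  have o03 : ((Finset.Ico (0 * a) (0 * a + a) ∩ Ecyc4 a 3).card).choose 2 = 0 := by
    apply Nat.choose_eq_zero_of_lt
    have h : (Finset.Ico (0 * a) (0 * a + a) ∩ Ecyc4 a 3).card ≤ 1 := by
      apply Finset.card_le_one.mpr
      intro x hx y hy
      rw [Finset.mem_inter, Finset.mem_Ico, mem_Ecyc4_3] at hx hy
      omega
    omega
  have o10 : ((Finset.Ico (1 * a) (1 * a + a) ∩ Ecyc4 a 0).card).choose 2 = 0 := by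
    apply Nat.choose_eq_zero_of_lt
    have h : (Finset.Ico (1 * a) (1 * a + a) ∩ Ecyc4 a 0).card ≤ 1 := by
      apply Finset.card_le_one.mpr
      intro x hx y hy
      rw [Finset.mem_inter, Finset.mem_Ico, mem_Ecyc4_0] at hx hy
      omega
    omega
  have o12 : ((Finset.Ico (1 * a) (1 * a + a) ∩ Ecyc4 a 2).card).choose 2 = 0 := by
    apply Nat.choose_eq_zero_of_lt
    have h : (Finset.Ico (1 * a) (1 * a + a) ∩ Ecyc4 a 2).card ≤ 1 := by
      apply Finset.card_le_one.mpr
      intro x hx y hy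
      rw [Finset.mem_inter, Finset.mem_Ico, mem_Ecyc4_2] at hx hy
      omega
    omega
  have o13 : ((Finset.Ico (1 * a) (1 * a + a) ∩ Ecyc4 a 3).card).choose 2 = 0 := by
    apply Nat.choose_eq_zero_of_lt
    have h : (Finset.Ico (1 * a) (1 * a + a) ∩ Ecyc4 a 3).card ≤ 1 := by
      apply Finset.card_le_one.mpr
      intro x hx y hy
      rw [Finset.mem_inter, Finset.mem_Ico, mem_Ecyc4_3] at hx hy
      omega
    omega
  have o20 : ((Finset.Ico (2 * a) (2 * a + a) ∩ Ecyc4 a 0).card).choose 2 = 0 := by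
    apply Nat.choose_eq_zero_of_lt
    have h : (Finset.Ico (2 * a) (2 * a + a) ∩ Ecyc4 a 0).card ≤ 1 := by
      apply Finset.card_le_one.mpr
      intro x hx y hy
      rw [Finset.mem_inter, Finset.mem_Ico, mem_Ecyc4_0] at hx hy
      omega
    omega
  have o21 : ((Finset.Ico (2 * a) (2 * a + a) ∩ Ecyc4 a 1).card).choose 2 = 0 := by
    apply Nat.choose_eq_zero_of_lt
    have h : (Finset.Ico (2 * a) (2 * a + a) ∩ Ecyc4 a 1).card ≤ 1 := by
      apply Finset.card_le_one.mpr
      intro x hx y hy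
      rw [Finset.mem_inter, Finset.mem_Ico, mem_Ecyc4_1] at hx hy
      omega
    omega
  have o23 : ((Finset.Ico (2 * a) (2 * a + a) ∩ Ecyc4 a 3).card).choose 2 = 0 := by
    apply Nat.choose_eq_zero_of_lt
    have h : (Finset.Ico (2 * a) (2 * a + a) ∩ Ecyc4 a 3).card ≤ 1 := by
      apply Finset.card_le_one.mpr
      intro x hx y hy
      rw [Finset.mem_inter, Finset.mem_Ico, mem_Ecyc4_3] at hx hy
      omega
    omega
  have o30 : ((Finset.Ico (3 * a) (3 * a + a) ∩ Ecyc4 a 0).card).choose 2 = 0 := by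
    apply Nat.choose_eq_zero_of_lt
    have h : (Finset.Ico (3 * a) (3 * a + a) ∩ Ecyc4 a 0).card ≤ 1 := by
      apply Finset.card_le_one.mpr
      intro x hx y hy
      rw [Finset.mem_inter, Finset.mem_Ico, mem_Ecyc4_0] at hx hy
      omega
    omega
  have o31 : ((Finset.Ico (3 * a) (3 * a + a) ∩ Ecyc4 a 1).card).choose 2 = 0 := by
    apply Nat.choose_eq_zero_of_lt
    have h : (Finset.Ico (3 * a) (3 * a + a) ∩ Ecyc4 a 1).card ≤ 1 := by
      apply Finset.card_le_one.mpr
      intro x hx y hy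
      rw [Finset.mem_inter, Finset.mem_Ico, mem_Ecyc4_1] at hx hy
      omega
    omega
  have o32 : ((Finset.Ico (3 * a) (3 * a + a) ∩ Ecyc4 a 2).card).choose 2 = 0 := by
    apply Nat.choose_eq_zero_of_lt
    have h : (Finset.Ico (3 * a) (3 * a + a) ∩ Ecyc4 a 2).card ≤ 1 := by
      apply Finset.card_le_one.mpr
      intro x hx y hy
      rw [Finset.mem_inter, Finset.mem_Ico, mem_Ecyc4_2] at hx hy
      omega
    omega
  simp only [Finset.sum_range_succ, Finset.sum_range_zero]
  rw [d0, d1, d2, d3, o01, o02, o03, o10, o12, o13, o20, o21, o23, o30, o31, o32]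
  omega

lemma cyc4_ne_std (ha2 : 2 ≤ a) (hb : 4 ≤ b) (hab : a * b = m) :
    pb m b (stdFam a) ≠ pb m b (scheme a 4 (Ecyc4 a)) := by
  intro h
  have hmem : afin m (scheme a 4 (Ecyc4 a) 0) ∈ pb m b (scheme a 4 (Ecyc4 a)) :=
    Finset.mem_image_of_mem _ (Finset.mem_range.mpr (by omega))
  rw [← h] at hmem
  obtain ⟨t, ht, heq⟩ := Finset.mem_image.mp hmem
  rw [Finset.mem_range] at ht
  have hIm : ∀ x : ℕ, x ∈ scheme a 4 (Ecyc4 a) 0 → x < m → x ∈ stdFam a t := by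
    intro x hx hxm
    have h1 : (⟨x, hxm⟩ : Fin m) ∈ afin m (scheme a 4 (Ecyc4 a) 0) := mem_afin.mpr hx
    rw [← heq] at h1
    exact mem_afin.mp h1
  have hma : 4 * a ≤ m := by
    calc 4 * a = a * 4 := Nat.mul_comm 4 a
    _ ≤ a * b := Nat.mul_le_mul_left a hb
    _ = m := hab
  have hscheme0 : scheme a 4 (Ecyc4 a) 0 = Ecyc4 a 0 := by
    rw [scheme, if_pos (by omega : (0:ℕ) < 4)]
  have h1mem : (1 : ℕ) ∈ scheme a 4 (Ecyc4 a) 0 := by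
    rw [hscheme0, mem_Ecyc4_0]
    omega
  have h3amem : (3 * a : ℕ) ∈ scheme a 4 (Ecyc4 a) 0 := by
    rw [hscheme0, mem_Ecyc4_0]
    omega
  have h1' := hIm 1 h1mem (by omega)
  have h3a' := hIm (3 * a) h3amem (by omega)
  simp only [stdFam, Finset.mem_Ico] at h1' h3a'
  by_cases ht1 : 1 ≤ t
  · have hh : 1 * a ≤ t * a := Nat.mul_le_mul_right a ht1
    rw [Nat.one_mul] at hh
    omega
  · have ht0 : t = 0 := by omega
    rw [ht0, Nat.zero_mul] at h3a'
    omega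
end cyc4
section dsw
variable {m a b : ℕ}

def Edsw (a : ℕ) : ℕ → Finset ℕ := fun t =>
  if t = 0 then Finset.Ico 1 (a + 1)
  else if t = 1 then insert 0 (insert (2 * a) (Finset.Ico (a + 2) (2 * a)))
  else insert (a + 1) (Finset.Ico (2 * a + 1) (3 * a))

lemma mem_Edsw_0 {x : ℕ} : x ∈ Edsw a 0 ↔ 1 ≤ x ∧ x < a + 1 := by
  simp [Edsw, Finset.mem_insert, Finset.mem_Ico]

lemma mem_Edsw_1 {x : ℕ} : x ∈ Edsw a 1 ↔ x = 0 ∨ x = 2 * a ∨ (a + 2 ≤ x ∧ x < 2 * a) := by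
  simp [Edsw, Finset.mem_insert, Finset.mem_Ico]

lemma mem_Edsw_2 {x : ℕ} : x ∈ Edsw a 2 ↔ x = a + 1 ∨ (2 * a + 1 ≤ x ∧ x < 3 * a) := by
  simp [Edsw, Finset.mem_insert, Finset.mem_Ico]

lemma Edsw_good (ha : 2 ≤ a) (hb : 3 ≤ b) (hab : a * b = m) :
    GoodFam m a b (scheme a 3 (Edsw a)) := by
  apply scheme_good (by omega) hab 3 hb
  · intro t ht
    interval_cases t
    · rw [show Edsw a 0 = Finset.Ico 1 (a + 1) from rfl, Nat.card_Ico]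
      omega
    · rw [show Edsw a 1 = insert 0 (insert (2 * a) (Finset.Ico (a + 2) (2 * a))) from rfl,
        Finset.card_insert_of_notMem (by
          simp only [Finset.mem_insert, Finset.mem_Ico]
          omega),
        Finset.card_insert_of_notMem (by rw [Finset.mem_Ico]; omega), Nat.card_Ico]
      omega
    · rw [show Edsw a 2 = insert (a + 1) (Finset.Ico (2 * a + 1) (3 * a)) from rfl,
        Finset.card_insert_of_notMem (by rw [Finset.mem_Ico]; omega), Nat.card_Ico]
      omega
  · intro t ht x hx
    interval_cases t
    · rw [mem_Edsw_0] at hx; omega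
    · rw [mem_Edsw_1] at hx; omega
    · rw [mem_Edsw_2] at hx; omega
  · intro x hx
    by_cases h0 : x = 0
    · exact ⟨1, by omega, mem_Edsw_1.mpr (by omega)⟩
    by_cases h1 : x < a + 1
    · exact ⟨0, by omega, mem_Edsw_0.mpr (by omega)⟩
    by_cases h2 : x = a + 1
    · exact ⟨2, by omega, mem_Edsw_2.mpr (by omega)⟩
    by_cases h3 : x < 2 * a
    · exact ⟨1, by omega, mem_Edsw_1.mpr (by omega)⟩
    by_cases h4 : x = 2 * a
    · exact ⟨1, by omega, mem_Edsw_1.mpr (by omega)⟩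
    · exact ⟨2, by omega, mem_Edsw_2.mpr (by omega)⟩
  · intro t u x ht hu hxt hxu
    interval_cases t <;> interval_cases u <;>
      simp only [mem_Edsw_0, mem_Edsw_1, mem_Edsw_2] at hxt hxu <;> omega

lemma dsw_T2_val (ha2 : 2 ≤ a) (hb : 3 ≤ b) (hab : a * b = m) :
    T2 (pb m b (stdFam a)) (pb m b (scheme a 3 (Edsw a))) =
      2 * ((a - 1).choose 2) + (a - 2).choose 2 + (b - 3) * a.choose 2 := by
  rw [scheme_T2 (by omega) hab hb (Edsw_good ha2 hb hab) ?hsmall]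
  case hsmall =>
    intro t u htr htb hur
    have h3a : 3 * a ≤ t * a := Nat.mul_le_mul_right a htr
    apply Finset.card_le_one.mpr
    intro x hx y hy
    exfalso
    rw [Finset.mem_inter, Finset.mem_Ico] at hx
    have hxE := hx.2
    interval_cases u <;>
      simp only [mem_Edsw_0, mem_Edsw_1, mem_Edsw_2] at hxE <;> omega
  have d0 : (Finset.Ico (0 * a) (0 * a + a) ∩ Edsw a 0).card = a - 1 := by
    have h : Finset.Ico (0 * a) (0 * a + a) ∩ Edsw a 0 = Finset.Ico 1 a := by
      ext x
      rw [Finset.mem_inter, Finset.mem_Ico, mem_Edsw_0, Finset.mem_Ico]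
      omega
    rw [h, Nat.card_Ico]
    try omega
  have d1 : (Finset.Ico (1 * a) (1 * a + a) ∩ Edsw a 1).card = a - 2 := by
    have h : Finset.Ico (1 * a) (1 * a + a) ∩ Edsw a 1 = Finset.Ico (a + 2) (2 * a) := by
      ext x
      rw [Finset.mem_inter, Finset.mem_Ico, mem_Edsw_1, Finset.mem_Ico]
      omega
    rw [h, Nat.card_Ico]
    try omega
  have d2 : (Finset.Ico (2 * a) (2 * a + a) ∩ Edsw a 2).card = a - 1 := by
    have h : Finset.Ico (2 * a) (2 * a + a) ∩ Edsw a 2 = Finset.Ico (2 * a + 1) (3 * a) := by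
      ext x
      rw [Finset.mem_inter, Finset.mem_Ico, mem_Edsw_2, Finset.mem_Ico]
      omega
    rw [h, Nat.card_Ico]
    try omega
  have o01 : ((Finset.Ico (0 * a) (0 * a + a) ∩ Edsw a 1).card).choose 2 = 0 := by
    apply Nat.choose_eq_zero_of_lt
    have h : (Finset.Ico (0 * a) (0 * a + a) ∩ Edsw a 1).card ≤ 1 := by
      apply Finset.card_le_one.mpr
      intro x hx y hy
      rw [Finset.mem_inter, Finset.mem_Ico, mem_Edsw_1] at hx hy
      omega
    omega
  have o02 : ((Finset.Ico (0 * a) (0 * a + a) ∩ Edsw a 2).card).choose 2 = 0 := by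
    apply Nat.choose_eq_zero_of_lt
    have h : (Finset.Ico (0 * a) (0 * a + a) ∩ Edsw a 2).card ≤ 1 := by
      apply Finset.card_le_one.mpr
      intro x hx y hy
      rw [Finset.mem_inter, Finset.mem_Ico, mem_Edsw_2] at hx hy
      omega
    omega
  have o10 : ((Finset.Ico (1 * a) (1 * a + a) ∩ Edsw a 0).card).choose 2 = 0 := by
    apply Nat.choose_eq_zero_of_lt
    have h : (Finset.Ico (1 * a) (1 * a + a) ∩ Edsw a 0).card ≤ 1 := by
      apply Finset.card_le_one.mpr
      intro x hx y hy
      rw [Finset.mem_inter, Finset.mem_Ico, mem_Edsw_0] at hx hy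
      omega
    omega
  have o12 : ((Finset.Ico (1 * a) (1 * a + a) ∩ Edsw a 2).card).choose 2 = 0 := by
    apply Nat.choose_eq_zero_of_lt
    have h : (Finset.Ico (1 * a) (1 * a + a) ∩ Edsw a 2).card ≤ 1 := by
      apply Finset.card_le_one.mpr
      intro x hx y hy
      rw [Finset.mem_inter, Finset.mem_Ico, mem_Edsw_2] at hx hy
      omega
    omega
  have o20 : ((Finset.Ico (2 * a) (2 * a + a) ∩ Edsw a 0).card).choose 2 = 0 := by
    apply Nat.choose_eq_zero_of_lt
    have h : (Finset.Ico (2 * a) (2 * a + a) ∩ Edsw a 0).card ≤ 1 := by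
      apply Finset.card_le_one.mpr
      intro x hx y hy
      rw [Finset.mem_inter, Finset.mem_Ico, mem_Edsw_0] at hx hy
      omega
    omega
  have o21 : ((Finset.Ico (2 * a) (2 * a + a) ∩ Edsw a 1).card).choose 2 = 0 := by
    apply Nat.choose_eq_zero_of_lt
    have h : (Finset.Ico (2 * a) (2 * a + a) ∩ Edsw a 1).card ≤ 1 := by
      apply Finset.card_le_one.mpr
      intro x hx y hy
      rw [Finset.mem_inter, Finset.mem_Ico, mem_Edsw_1] at hx hy
      omega
    omega
  simp only [Finset.sum_range_succ, Finset.sum_range_zero]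
  rw [d0, d1, d2, o01, o02, o10, o12, o20, o21]
  omega

lemma dsw_ne_std (ha2 : 2 ≤ a) (hb : 3 ≤ b) (hab : a * b = m) :
    pb m b (stdFam a) ≠ pb m b (scheme a 3 (Edsw a)) := by
  intro h
  have hmem : afin m (scheme a 3 (Edsw a) 0) ∈ pb m b (scheme a 3 (Edsw a)) :=
    Finset.mem_image_of_mem _ (Finset.mem_range.mpr (by omega))
  rw [← h] at hmem
  obtain ⟨t, ht, heq⟩ := Finset.mem_image.mp hmem
  rw [Finset.mem_range] at ht
  have hIm : ∀ x : ℕ, x ∈ scheme a 3 (Edsw a) 0 → x < m → x ∈ stdFam a t := by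
    intro x hx hxm
    have h1 : (⟨x, hxm⟩ : Fin m) ∈ afin m (scheme a 3 (Edsw a) 0) := mem_afin.mpr hx
    rw [← heq] at h1
    exact mem_afin.mp h1
  have hma : 3 * a ≤ m := by
    calc 3 * a = a * 3 := Nat.mul_comm 3 a
    _ ≤ a * b := Nat.mul_le_mul_left a hb
    _ = m := hab
  have hscheme0 : scheme a 3 (Edsw a) 0 = Edsw a 0 := by
    rw [scheme, if_pos (by omega : (0:ℕ) < 3)]
  have h1mem : (1 : ℕ) ∈ scheme a 3 (Edsw a) 0 := by
    rw [hscheme0, mem_Edsw_0]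
    omega
  have hamem : (a : ℕ) ∈ scheme a 3 (Edsw a) 0 := by
    rw [hscheme0, mem_Edsw_0]
    omega
  have h1' := hIm 1 h1mem (by omega)
  have ha' := hIm a hamem (by omega)
  simp only [stdFam, Finset.mem_Ico] at h1' ha'
  by_cases ht1 : 1 ≤ t
  · have hh : 1 * a ≤ t * a := Nat.mul_le_mul_right a ht1
    rw [Nat.one_mul] at hh
    omega
  · have ht0 : t = 0 := by omega
    rw [ht0, Nat.zero_mul] at ha'
    omega
end dsw
section assemble
variable {m a b : ℕ}

lemma choose2_succ (n : ℕ) : (n + 1).choose 2 = n.choose 2 + n := by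
  have h : (n + 1).choose 2 = n.choose 1 + n.choose 2 := Nat.choose_succ_succ' n 1
  rw [h, Nat.choose_one_right]
  omega

lemma choose2_pred {n : ℕ} (h : 1 ≤ n) : n.choose 2 = (n - 1).choose 2 + (n - 1) := by
  have h2 := choose2_succ (n - 1)
  rw [show n - 1 + 1 = n from by omega] at h2
  exact h2

lemma partitions_three_le (hm : 11 ≤ m) (ha : 2 ≤ a) (hb : 2 ≤ b) (hab : a * b = m) :
    3 ≤ Nat.card (Quot (partitionPairRel m a b)) := by
  have ha1 : 0 < a := by omega
  have hstd := pb_isPartition ha1 (stdFam_good (m := m) (b := b) ha1 hab)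
  have mkpair : ∀ S' : ℕ → Finset ℕ, GoodFam m a b S' →
      pb m b (stdFam a) ≠ pb m b S' →
      IsPartitionPair m a b {pb m b (stdFam a), pb m b S'} := by
    intro S' hgood hne
    refine ⟨Finset.card_pair hne, fun A hA => ?_⟩
    rcases Finset.mem_insert.mp hA with rfl | hA
    · exact hstd
    · rw [Finset.mem_singleton.mp hA]
      exact pb_isPartition ha1 hgood
  have tval : ∀ S' : ℕ → Finset ℕ, GoodFam m a b S' →
      pb m b (stdFam a) ≠ pb m b S' →
      tInv ({pb m b (stdFam a), pb m b S'} : Finset _) =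
        2 * (b * a.choose 2) + 2 * T2 (pb m b (stdFam a)) (pb m b S') := by
    intro S' hgood hne
    rw [tInv_pair hne, T2_self hstd, T2_self (pb_isPartition ha1 hgood)]
    ring
  have rA : a.choose 2 = (a - 1).choose 2 + (a - 1) := choose2_pred (by omega)
  have rA1 : (a - 1).choose 2 = (a - 2).choose 2 + (a - 2) := by
    have h := choose2_pred (n := a - 1) (by omega)
    rw [show a - 1 - 1 = a - 2 from by omega] at h
    exact h
  by_cases hb2 : b = 2
  · -- b = 2, hence a ≥ 6 : use swap 1, swap 2, swap 3
    subst hb2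
    have ha6 : 6 ≤ a := by omega
    have rA2 : (a - 2).choose 2 = (a - 3).choose 2 + (a - 3) := by
      have h := choose2_pred (n := a - 2) (by omega)
      rw [show a - 2 - 1 = a - 3 from by omega] at h
      exact h
    have g1 := Eswap_good (m := m) ha1 (le_refl 2) hab (i := 1) (by omega) (by omega)
    have g2 := Eswap_good (m := m) ha1 (le_refl 2) hab (i := 2) (by omega) (by omega)
    have g3 := Eswap_good (m := m) ha1 (le_refl 2) hab (i := 3) (by omega) (by omega)
    have n1 := swap_ne_std (m := m) ha (le_refl 2) hab (i := 1) (by omega) (by omega)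
    have n2 := swap_ne_std (m := m) ha (le_refl 2) hab (i := 2) (by omega) (by omega)
    have n3 := swap_ne_std (m := m) ha (le_refl 2) hab (i := 3) (by omega) (by omega)
    have c1 : Nat.choose 1 2 = 0 := by decide
    have c2 : Nat.choose 2 2 = 1 := by decide
    have c3 : Nat.choose 3 2 = 3 := by decide
    apply three_le_natCard
      (a := Quot.mk _ (⟨_, mkpair _ g1 n1⟩ : {P // IsPartitionPair m a 2 P}))
      (b := Quot.mk _ (⟨_, mkpair _ g2 n2⟩ : {P // IsPartitionPair m a 2 P}))
      (c := Quot.mk _ (⟨_, mkpair _ g3 n3⟩ : {P // IsPartitionPair m a 2 P}))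
    · apply quot_mk_ne (fun P => tInv P.1) tInv_respects
      show tInv _ ≠ tInv _
      rw [tval _ g1 n1, tval _ g2 n2,
        swap_T2_val ha (le_refl 2) hab (i := 1) (by omega) (by omega),
        swap_T2_val ha (le_refl 2) hab (i := 2) (by omega) (by omega)]
      omega
    · apply quot_mk_ne (fun P => tInv P.1) tInv_respects
      show tInv _ ≠ tInv _
      rw [tval _ g1 n1, tval _ g3 n3,
        swap_T2_val ha (le_refl 2) hab (i := 1) (by omega) (by omega),
        swap_T2_val ha (le_refl 2) hab (i := 3) (by omega) (by omega)]
      omega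
    · apply quot_mk_ne (fun P => tInv P.1) tInv_respects
      show tInv _ ≠ tInv _
      rw [tval _ g2 n2, tval _ g3 n3,
        swap_T2_val ha (le_refl 2) hab (i := 2) (by omega) (by omega),
        swap_T2_val ha (le_refl 2) hab (i := 3) (by omega) (by omega)]
      omega
  · by_cases hb3 : b = 3
    · -- b = 3, hence a ≥ 4 : use swap 1, cyc3, dsw
      subst hb3
      have ha4 : 4 ≤ a := by omega
      have g1 := Eswap_good (m := m) ha1 (by omega) hab (i := 1) (by omega) (by omega)
      have gc := Ecyc3_good (m := m) ha (le_refl 3) hab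
      have gd := Edsw_good (m := m) ha (le_refl 3) hab
      have n1 := swap_ne_std (m := m) ha (by omega) hab (i := 1) (by omega) (by omega)
      have nc := cyc3_ne_std (m := m) ha (le_refl 3) hab
      have nd := dsw_ne_std (m := m) ha (le_refl 3) hab
      have c1 : Nat.choose 1 2 = 0 := by decide
      apply three_le_natCard
        (a := Quot.mk _ (⟨_, mkpair _ g1 n1⟩ : {P // IsPartitionPair m a 3 P}))
        (b := Quot.mk _ (⟨_, mkpair _ gc nc⟩ : {P // IsPartitionPair m a 3 P}))
        (c := Quot.mk _ (⟨_, mkpair _ gd nd⟩ : {P // IsPartitionPair m a 3 P}))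
      · apply quot_mk_ne (fun P => tInv P.1) tInv_respects
        show tInv _ ≠ tInv _
        rw [tval _ g1 n1, tval _ gc nc,
          swap_T2_val ha (by omega) hab (i := 1) (by omega) (by omega),
          cyc3_T2_val ha (le_refl 3) hab]
        omega
      · apply quot_mk_ne (fun P => tInv P.1) tInv_respects
        show tInv _ ≠ tInv _
        rw [tval _ g1 n1, tval _ gd nd,
          swap_T2_val ha (by omega) hab (i := 1) (by omega) (by omega),
          dsw_T2_val ha (le_refl 3) hab]
        omega
      · apply quot_mk_ne (fun P => tInv P.1) tInv_respects
        show tInv _ ≠ tInv _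
        rw [tval _ gc nc, tval _ gd nd,
          cyc3_T2_val ha (le_refl 3) hab, dsw_T2_val ha (le_refl 3) hab]
        omega
    · -- b ≥ 4 : use swap 1, cyc3, cyc4
      have hb4 : 4 ≤ b := by omega
      have g1 := Eswap_good (m := m) ha1 (by omega) hab (i := 1) (by omega) (by omega)
      have gc := Ecyc3_good (m := m) ha (by omega) hab
      have gc4 := Ecyc4_good (m := m) ha hb4 hab
      have n1 := swap_ne_std (m := m) ha (by omega) hab (i := 1) (by omega) (by omega)
      have nc := cyc3_ne_std (m := m) ha (by omega) hab
      have nc4 := cyc4_ne_std (m := m) ha hb4 hab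
      have c1 : Nat.choose 1 2 = 0 := by decide
      have s2 : (b - 2) * a.choose 2 = (b - 3) * a.choose 2 + a.choose 2 := by
        rw [show b - 2 = (b - 3) + 1 from by omega, Nat.succ_mul]
      have s3 : (b - 3) * a.choose 2 = (b - 4) * a.choose 2 + a.choose 2 := by
        rw [show b - 3 = (b - 4) + 1 from by omega, Nat.succ_mul]
      apply three_le_natCard
        (a := Quot.mk _ (⟨_, mkpair _ g1 n1⟩ : {P // IsPartitionPair m a b P}))
        (b := Quot.mk _ (⟨_, mkpair _ gc nc⟩ : {P // IsPartitionPair m a b P}))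
        (c := Quot.mk _ (⟨_, mkpair _ gc4 nc4⟩ : {P // IsPartitionPair m a b P}))
      · apply quot_mk_ne (fun P => tInv P.1) tInv_respects
        show tInv _ ≠ tInv _
        rw [tval _ g1 n1, tval _ gc nc,
          swap_T2_val ha (by omega) hab (i := 1) (by omega) (by omega),
          cyc3_T2_val ha (by omega) hab]
        omega
      · apply quot_mk_ne (fun P => tInv P.1) tInv_respects
        show tInv _ ≠ tInv _
        rw [tval _ g1 n1, tval _ gc4 nc4,
          swap_T2_val ha (by omega) hab (i := 1) (by omega) (by omega),
          cyc4_T2_val ha hb4 hab]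
        omega
      · apply quot_mk_ne (fun P => tInv P.1) tInv_respects
        show tInv _ ≠ tInv _
        rw [tval _ gc nc, tval _ gc4 nc4,
          cyc3_T2_val ha (by omega) hab, cyc4_T2_val ha hb4 hab]
        omega
end assemble


/-- let `m ≥ 11` and let `A_m` act naturally on a set `Ω`, where `Ω` is
either the set of `k`-element subsets of `{1, ..., m}` (`2 ≤ k < m/2`) or the set of
partitions of `{1, ..., m}` into `b` subsets of size `a` (`a, b ≥ 2`, `ab = m`). Then the
number of `A_m`-orbits on unordered pairs of distinct elements of `Ω` is at least 3,
unless `Ω` is the set of `2`-element subsets, in which case this number equals 2. -/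
theorem stmt12 (m : ℕ) (hm : 11 ≤ m) :
    (∀ k, 2 ≤ k → 2 * k < m →
      (3 ≤ k → 3 ≤ Nat.card (Quot (subsetPairRel m k))) ∧
      (k = 2 → Nat.card (Quot (subsetPairRel m k)) = 2)) ∧
    (∀ a b, 2 ≤ a → 2 ≤ b → a * b = m →
      3 ≤ Nat.card (Quot (partitionPairRel m a b))) := by
  constructor
  · intro k hk2 hkm
    constructor
    · intro hk3
      exact subsets_three_le hm hk3 hkm
    · rintro rfl
      exact subsets_eq_two hm
  · intro a b ha hb hab
    exact partitions_three_le hm ha hb hab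
end

section
/- Let F be an algebraically closed field, n ≥ 3, and fix the natural embedding of S_{n−1} into S_n (as the stabilizer of the point n). Let U be a finite-dimensional F-vector space and Ψ : S_{n−1} → GL(U) an irreducible representation. If Φ_1, Φ_2 : S_n → GL(U) are representations with Φ_1|_{S_{n−1}} = Ψ = Φ_2|_{S_{n−1}}, then Φ_1 = Φ_2. In particular, Ψ has at most one extension to S_n. -/
/-- Schur's lemma, in the form we need: over an algebraically closed field, an
endomorphism commuting with an irreducible representation is scalar. -/
lemma schur_scalar_s18 {F U : Type*} [Field F] [IsAlgClosed F] [AddCommGroup U] [Module F U]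
    [FiniteDimensional F U] {G : Type*} [Monoid G] (Ψ : Representation F G U)
    (hΨ : RepIrreducible Ψ) (A : Module.End F U) (hA : ∀ g : G, A * Ψ g = Ψ g * A) :
    ∃ c : F, A = c • 1 := by
  haveI : Nontrivial U := hΨ.1
  obtain ⟨c, hc⟩ := Module.End.exists_eigenvalue A
  refine ⟨c, ?_⟩
  have hinv : RepInvariant Ψ (Module.End.eigenspace A c) := by
    intro g v hv
    rw [Module.End.mem_eigenspace_iff] at hv ⊢
    have h1 : A (Ψ g v) = Ψ g (A v) := by
      have := congrArg (fun f : Module.End F U => f v) (hA g)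
      simpa using this
    rw [h1, hv, map_smul]
  rcases hΨ.2 _ hinv with h | h
  · exact absurd h hc
  · ext v
    have hv : v ∈ Module.End.eigenspace A c := h ▸ Submodule.mem_top
    rw [Module.End.mem_eigenspace_iff] at hv
    simpa using hv

/-- The general form of statement 18, for an arbitrary stabilized point `pt` and two
further distinct points `z`, `o`. -/
theorem stmt18_general {F : Type*} [Field F] [IsAlgClosed F]
    {n : ℕ}
    (U : Type*) [AddCommGroup U] [Module F U] [FiniteDimensional F U]
    (pt z o : Fin n) (hzp : z ≠ pt) (hop : o ≠ pt) (hzo : z ≠ o)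
    (Ψ : Representation F (MulAction.stabilizer (Equiv.Perm (Fin n)) pt) U)
    (hΨ : RepIrreducible Ψ)
    (Φ₁ Φ₂ : Representation F (Equiv.Perm (Fin n)) U)
    (h₁ : Φ₁.comp (MulAction.stabilizer (Equiv.Perm (Fin n)) pt).subtype = Ψ)
    (h₂ : Φ₂.comp (MulAction.stabilizer (Equiv.Perm (Fin n)) pt).subtype = Ψ) :
    Φ₁ = Φ₂ := by
  classical
  haveI : Nontrivial U := hΨ.1
  have memH : ∀ g : Equiv.Perm (Fin n), g pt = pt →
      g ∈ MulAction.stabilizer (Equiv.Perm (Fin n)) pt := by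
    intro g hg
    rw [MulAction.mem_stabilizer_iff, Equiv.Perm.smul_def]
    exact hg
  -- restrictions
  have res1 : ∀ (g : Equiv.Perm (Fin n)) (hg : g pt = pt),
      Φ₁ g = Ψ ⟨g, memH g hg⟩ := by
    intro g hg
    simpa using DFunLike.congr_fun h₁
      (⟨g, memH g hg⟩ : MulAction.stabilizer (Equiv.Perm (Fin n)) pt)
  have res2 : ∀ (g : Equiv.Perm (Fin n)) (hg : g pt = pt),
      Φ₂ g = Ψ ⟨g, memH g hg⟩ := by
    intro g hg
    simpa using DFunLike.congr_fun h₂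
      (⟨g, memH g hg⟩ : MulAction.stabilizer (Equiv.Perm (Fin n)) pt)
  have agree : ∀ (g : Equiv.Perm (Fin n)), g pt = pt → Φ₁ g = Φ₂ g := by
    intro g hg
    rw [res1 g hg, res2 g hg]
  -- a fixed nonzero vector, used to extract scalar identities
  obtain ⟨u, hu⟩ := exists_ne (0 : U)
  have smul_inj : ∀ a b : F, a • (1 : Module.End F U) = b • 1 → a = b := by
    intro a b hab
    have h0 := congrArg (fun f : Module.End F U => f u) hab
    simp only [LinearMap.smul_apply, Module.End.one_apply] at h0
    by_contra hne
    have h1 : (a - b) • u = 0 := by rw [sub_smul, h0, sub_self]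
    rcases smul_eq_zero.mp h1 with h | h
    · exact hne (sub_eq_zero.mp h)
    · exact hu h
  -- the Jucys–Murphy type scalar for an extension
  have keyscal : ∀ Φ : Representation F (Equiv.Perm (Fin n)) U,
      (∀ (g : Equiv.Perm (Fin n)) (hg : g pt = pt), Φ g = Ψ ⟨g, memH g hg⟩) →
      ∃ c : F, (∑ j : Fin n, Φ (Equiv.swap j z)) = c • 1 := by
    intro Φ res
    set Λ : Module.End F U := ∑ k : Fin n, Φ (Equiv.swap k pt) with hΛ
    have hcomm : ∀ g : ↥(MulAction.stabilizer (Equiv.Perm (Fin n)) pt),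
        Λ * Ψ g = Ψ g * Λ := by
      intro g
      have hgp : (g : Equiv.Perm (Fin n)) pt = pt := g.2
      have hΨg : Ψ g = Φ (g : Equiv.Perm (Fin n)) := by
        rw [res _ hgp]
      rw [hΨg, hΛ, Finset.sum_mul, Finset.mul_sum]
      have hterm : ∀ k : Fin n,
          Φ (g : Equiv.Perm (Fin n)) * Φ (Equiv.swap k pt)
            = Φ (Equiv.swap ((g : Equiv.Perm (Fin n)) k) pt)
              * Φ (g : Equiv.Perm (Fin n)) := by
        intro k
        rw [← map_mul, ← map_mul]
        congr 1
        have hs := Equiv.mul_swap_eq_swap_mul (g : Equiv.Perm (Fin n)) k pt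
        rw [hgp] at hs
        exact hs
      symm
      calc (∑ k : Fin n, Φ (g : Equiv.Perm (Fin n)) * Φ (Equiv.swap k pt))
          = ∑ k : Fin n, Φ (Equiv.swap ((g : Equiv.Perm (Fin n)) k) pt)
              * Φ (g : Equiv.Perm (Fin n)) :=
            Finset.sum_congr rfl fun k _ => hterm k
        _ = ∑ j : Fin n, Φ (Equiv.swap j pt) * Φ (g : Equiv.Perm (Fin n)) :=
            Equiv.sum_comp (g : Equiv.Perm (Fin n))
              (fun j => Φ (Equiv.swap j pt) * Φ (g : Equiv.Perm (Fin n)))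
    obtain ⟨c, hc⟩ := schur_scalar_s18 Ψ hΨ Λ hcomm
    refine ⟨c, ?_⟩
    -- conjugate `Λ = c • 1` by the involution `Φ (swap z pt)`
    have hXX : Φ (Equiv.swap z pt) * Φ (Equiv.swap z pt) = 1 := by
      rw [← map_mul, Equiv.swap_mul_self, map_one]
    have hconj : Φ (Equiv.swap z pt) * Λ * Φ (Equiv.swap z pt)
        = ∑ j : Fin n, Φ (Equiv.swap j z) := by
      rw [hΛ, Finset.mul_sum, Finset.sum_mul]
      have hterm : ∀ k : Fin n,
          Φ (Equiv.swap z pt) * Φ (Equiv.swap k pt) * Φ (Equiv.swap z pt)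
            = Φ (Equiv.swap (Equiv.swap z pt k) z) := by
        intro k
        rw [← map_mul, ← map_mul]
        congr 1
        have hs := Equiv.swap_apply_apply (Equiv.swap z pt) k pt
        rw [Equiv.swap_apply_right, Equiv.swap_inv] at hs
        rw [hs]
      calc (∑ k : Fin n, Φ (Equiv.swap z pt) * Φ (Equiv.swap k pt) * Φ (Equiv.swap z pt))
          = ∑ k : Fin n, Φ (Equiv.swap (Equiv.swap z pt k) z) :=
            Finset.sum_congr rfl fun k _ => hterm k
        _ = ∑ j : Fin n, Φ (Equiv.swap j z) :=
            Equiv.sum_comp (Equiv.swap z pt) (fun j => Φ (Equiv.swap j z))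
    have hfin : Φ (Equiv.swap z pt) * Λ * Φ (Equiv.swap z pt) = c • 1 := by
      rw [hc, mul_smul_one, smul_mul_assoc, hXX]
    rw [← hconj, hfin]
  obtain ⟨c₁, hc₁⟩ := keyscal Φ₁ res1
  obtain ⟨c₂, hc₂⟩ := keyscal Φ₂ res2
  -- the difference of the two values on `swap z pt` is scalar
  set X₁ : Module.End F U := Φ₁ (Equiv.swap z pt) with hX1
  set X₂ : Module.End F U := Φ₂ (Equiv.swap z pt) with hX2
  set δ : F := c₂ - c₁ with hδ
  have hdiff : X₂ = X₁ + δ • 1 := by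
    have hsum : (∑ j : Fin n, (Φ₂ (Equiv.swap j z) - Φ₁ (Equiv.swap j z))) = δ • 1 := by
      rw [Finset.sum_sub_distrib, hc₁, hc₂, hδ, sub_smul]
    have hsingle : (∑ j : Fin n, (Φ₂ (Equiv.swap j z) - Φ₁ (Equiv.swap j z)))
        = X₂ - X₁ := by
      rw [Finset.sum_eq_single_of_mem pt (Finset.mem_univ pt)]
      · rw [Equiv.swap_comm pt z]
      · intro j _ hjp
        have hfix : (Equiv.swap j z) pt = pt :=
          Equiv.swap_apply_of_ne_of_ne (Ne.symm hjp) (Ne.symm hzp)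
        rw [agree _ hfix, sub_self]
    have h3 := hsingle.symm.trans hsum
    rw [sub_eq_iff_eq_add] at h3
    rw [h3, add_comm]
  have hX₁sq : X₁ * X₁ = 1 := by
    rw [hX1, ← map_mul, Equiv.swap_mul_self, map_one]
  have hX₂sq : X₂ * X₂ = 1 := by
    rw [hX2, ← map_mul, Equiv.swap_mul_self, map_one]
  -- main claim : δ = 0
  have hδ0 : δ = 0 := by
    by_contra hδne
    -- expand (X₁ + δ•1)² = 1
    have h1 : (X₁ + δ • 1) * (X₁ + δ • 1) = 1 + ((2 * δ) • X₁ + (δ * δ) • 1) := by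
      simp only [mul_add, add_mul, hX₁sq, smul_one_mul, mul_smul_one, smul_add,
        smul_smul, two_mul, add_smul]
      abel
    have hexp : (2 * δ) • X₁ + (δ * δ) • 1 = 0 := by
      have h0 : 1 + ((2 * δ) • X₁ + (δ * δ) • 1) = 1 + 0 := by
        rw [add_zero, ← h1, ← hdiff]
        exact hX₂sq
      exact add_left_cancel h0
    by_cases h2δ : (2 : F) * δ = 0
    · -- then (δ*δ) • 1 = 0, contradiction
      rw [h2δ, zero_smul, zero_add] at hexp
      have h4 : δ * δ = 0 := smul_inj (δ * δ) 0 (by rw [hexp, zero_smul])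
      rcases mul_eq_zero.mp h4 with h | h <;> exact hδne h
    · -- X₁ is scalar; derive a contradiction using the point `o`
      set e : F := (2 * δ)⁻¹ * (-(δ * δ)) with he
      have hXs : X₁ = e • 1 := by
        have h3 : (2 * δ) • X₁ = (-(δ * δ)) • 1 := by
          rw [neg_smul]
          exact eq_neg_of_add_eq_zero_left hexp
        have h5 : X₁ = (2 * δ)⁻¹ • ((2 * δ) • X₁) := by
          rw [smul_smul, inv_mul_cancel₀ h2δ, one_smul]
        rw [h5, h3, smul_smul, he]
      -- conjugation identities
      have hswap_op : Equiv.swap o pt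
          = Equiv.swap z o * Equiv.swap z pt * Equiv.swap z o := by
        have hs := Equiv.swap_apply_apply (Equiv.swap z o) z pt
        rw [Equiv.swap_apply_left,
          Equiv.swap_apply_of_ne_of_ne (Ne.symm hzp) (Ne.symm hop),
          Equiv.swap_inv] at hs
        rw [hs]
      have hswap_zo : Equiv.swap o z
          = Equiv.swap z pt * Equiv.swap o pt * Equiv.swap z pt := by
        have hs := Equiv.swap_apply_apply (Equiv.swap z pt) o pt
        rw [Equiv.swap_apply_right,
          Equiv.swap_apply_of_ne_of_ne (Ne.symm hzo) hop, Equiv.swap_inv] at hs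
        rw [hs]
      -- compute Φ (swap o z) as a scalar, given that Φ (swap z pt) is scalar
      have scal : ∀ (Φ : Representation F (Equiv.Perm (Fin n)) U) (a : F),
          Φ (Equiv.swap z pt) = a • 1 → Φ (Equiv.swap o z) = (a * a * a) • 1 := by
        intro Φ a ha
        have h4 : Φ (Equiv.swap o pt) = a • 1 := by
          rw [hswap_op, map_mul, map_mul, ha, mul_smul_one, smul_mul_assoc,
            ← map_mul, Equiv.swap_mul_self, map_one]
        rw [hswap_zo, map_mul, map_mul, ha, h4, smul_one_mul, smul_smul,
          smul_one_mul, smul_smul]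
      have hs1 : Φ₁ (Equiv.swap o z) = (e * e * e) • 1 := scal Φ₁ e hXs
      have hXs2 : X₂ = (e + δ) • 1 := by
        rw [hdiff, hXs, add_smul]
      have hs2 : Φ₂ (Equiv.swap o z) = ((e + δ) * (e + δ) * (e + δ)) • 1 :=
        scal Φ₂ (e + δ) hXs2
      -- but swap o z fixes pt, so the two values agree
      have hfix : (Equiv.swap o z) pt = pt :=
        Equiv.swap_apply_of_ne_of_ne (Ne.symm hop) (Ne.symm hzp)
      have hsc : e * e * e = (e + δ) * (e + δ) * (e + δ) :=
        smul_inj _ _ (by rw [← hs1, ← hs2, agree _ hfix])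
      -- e² = 1 and (e+δ)² = 1
      have hX11 : X₁ * X₁ = (e * e) • 1 := by
        rw [hXs, smul_one_mul, smul_smul]
      have he2 : e * e = 1 :=
        smul_inj _ _ (by rw [← hX11, hX₁sq, one_smul])
      have hX22 : X₂ * X₂ = ((e + δ) * (e + δ)) • 1 := by
        rw [hXs2, smul_one_mul, smul_smul]
      have hee2 : (e + δ) * (e + δ) = 1 :=
        smul_inj _ _ (by rw [← hX22, hX₂sq, one_smul])
      -- hence e = e + δ, so δ = 0
      have hfin : e = e + δ := by
        calc e = e * e * e := by rw [he2, one_mul]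
          _ = (e + δ) * (e + δ) * (e + δ) := hsc
          _ = e + δ := by rw [hee2, one_mul]
      exact hδne (left_eq_add.mp hfin)
  have hX12 : X₁ = X₂ := by rw [hdiff, hδ0, zero_smul, add_zero]
  -- agreement on all swaps
  have hswap : ∀ x y : Fin n, x ≠ y → Φ₁ (Equiv.swap x y) = Φ₂ (Equiv.swap x y) := by
    have main : ∀ x : Fin n, x ≠ pt → Φ₁ (Equiv.swap x pt) = Φ₂ (Equiv.swap x pt) := by
      intro x hx
      by_cases hxz : x = z
      · rw [hxz, ← hX1, ← hX2]
        exact hX12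
      · have hconj : Equiv.swap x pt
            = Equiv.swap z x * Equiv.swap z pt * Equiv.swap z x := by
          have hs := Equiv.swap_apply_apply (Equiv.swap z x) z pt
          rw [Equiv.swap_apply_left,
            Equiv.swap_apply_of_ne_of_ne (Ne.symm hzp) (Ne.symm hx),
            Equiv.swap_inv] at hs
          rw [hs]
        have hfixzx : (Equiv.swap z x) pt = pt :=
          Equiv.swap_apply_of_ne_of_ne (Ne.symm hzp) (Ne.symm hx)
        rw [hconj, map_mul, map_mul, map_mul, map_mul, agree _ hfixzx, ← hX1, ← hX2,
          hX12]
    intro x y hxy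
    by_cases hx : x = pt
    · subst hx
      rw [Equiv.swap_comm]
      exact main y (Ne.symm hxy)
    · by_cases hy : y = pt
      · subst hy
        exact main x hx
      · have hfix : (Equiv.swap x y) pt = pt :=
          Equiv.swap_apply_of_ne_of_ne (Ne.symm hx) (Ne.symm hy)
        exact agree _ hfix
  -- conclude by swap induction
  refine MonoidHom.ext fun g => ?_
  refine Equiv.Perm.swap_induction_on (motive := fun f => Φ₁ f = Φ₂ f) g ?_ ?_
  · show Φ₁ 1 = Φ₂ 1
    rw [map_one, map_one]
  · intro f x y hxy ih
    show Φ₁ (Equiv.swap x y * f) = Φ₂ (Equiv.swap x y * f)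
    rw [map_mul, map_mul, ih, hswap x y hxy]

/-- let `F` be algebraically closed, `n ≥ 3`, and embed `S_{n-1}` into
`Sₙ` as the stabilizer of the last point. If `Ψ` is an irreducible representation of
`S_{n-1}` on a finite-dimensional space `U`, and `Φ₁, Φ₂` are representations of `Sₙ`
on `U` both restricting to `Ψ` on `S_{n-1}`, then `Φ₁ = Φ₂`; in particular `Ψ` has at
most one extension to `Sₙ`. -/
theorem stmt18 {F : Type*} [Field F] [IsAlgClosed F]
    {n : ℕ} (hn : 3 ≤ n)
    (U : Type*) [AddCommGroup U] [Module F U] [FiniteDimensional F U]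
    (Ψ : Representation F
      (MulAction.stabilizer (Equiv.Perm (Fin n)) (⟨n - 1, by omega⟩ : Fin n)) U)
    (hΨ : RepIrreducible Ψ)
    (Φ₁ Φ₂ : Representation F (Equiv.Perm (Fin n)) U)
    (h₁ : Φ₁.comp (MulAction.stabilizer (Equiv.Perm (Fin n))
      (⟨n - 1, by omega⟩ : Fin n)).subtype = Ψ)
    (h₂ : Φ₂.comp (MulAction.stabilizer (Equiv.Perm (Fin n))
      (⟨n - 1, by omega⟩ : Fin n)).subtype = Ψ) :
    Φ₁ = Φ₂ := by
  refine stmt18_general U (⟨n - 1, by omega⟩ : Fin n) (⟨0, by omega⟩ : Fin n)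
    (⟨1, by omega⟩ : Fin n) ?_ ?_ ?_ Ψ hΨ Φ₁ Φ₂ h₁ h₂
  · simp only [ne_eq, Fin.mk.injEq]
    omega
  · simp only [ne_eq, Fin.mk.injEq]
    omega
  · simp only [ne_eq, Fin.mk.injEq]
    omega
end
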